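/- arXiv:2006.16602 — 3 statements merged into one kernel-verified Lean document; each statement's English description precedes it below -/
import Mathlib

section
/- Let M be a metric space and f : M → M a homeomorphism. Let (K₁, j₁, h₁) and (K₂, j₂, h₂) be two weak Denjoy sub-systems for f with j₁(K₁) = j₂(K₂). Then the order graphs satisfy G(K₁, j₁) = G(K₂, j₂) or G(K₁, j₁) = G(K₂, j₂)⁻ (the reverse of G(K₂, j₂)). -/
open Filter Topology Set

noncomputable section

/-- A Denjoy example: an orientation-preserving circle homeomorphism with
irrational rotation number together with its minimal invariant Cantor set. -/
structure DenjoySystem where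
  /-- the circle homeomorphism -/
  h : UnitAddCircle ≃ₜ UnitAddCircle
  /-- the minimal set -/
  K : Set UnitAddCircle
  /-- a lift of `h` to `ℝ` -/
  lift : ℝ → ℝ
  lift_mono : StrictMono lift
  lift_cont : Continuous lift
  lift_bij : Function.Bijective lift
  lift_add : ∀ x : ℝ, lift (x + 1) = lift x + 1
  lift_proj : ∀ x : ℝ, ((lift x : ℝ) : UnitAddCircle) = h (x : UnitAddCircle)
  /-- a representative of the rotation number -/
  rot : ℝ
  rot_lim : Filter.Tendsto (fun n : ℕ => lift^[n] 0 / (n : ℝ)) Filter.atTop (nhds rot)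
  rot_irr : Irrational rot
  K_ne : K.Nonempty
  K_cpt : IsCompact K
  K_proper : K ≠ Set.univ
  K_inv : h '' K = K
  K_perf : Perfect K
  K_td : IsTotallyDisconnected K
  K_min : ∀ x ∈ K, ∀ y ∈ K, y ∈ closure {z | ∃ n : ℤ, (h.toEquiv ^ n) x = z}

/-- A weak Denjoy sub-system (WDS) for a map `f : M → M`. -/
structure WDS (M : Type*) [TopologicalSpace M] (f : M → M) extends DenjoySystem where
  /-- the embedding of the minimal set into `M` -/
  j : K → M
  j_emb : Topology.IsEmbedding j
  range_inv : f '' Set.range j = Set.range j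
  equivar : ∀ x y : K, h (x : UnitAddCircle) = (y : UnitAddCircle) → j y = f (j x)

/-- Weak cyclic order on the circle. -/
def CircBtw (a b c : UnitAddCircle) : Prop :=
  ∃ x y z : ℝ, (x : UnitAddCircle) = a ∧ (y : UnitAddCircle) = b ∧ (z : UnitAddCircle) = c ∧
    x ≤ y ∧ y ≤ z ∧ z ≤ x + 1

/-- The order graph of a WDS. -/
def WDS.orderGraph {M : Type*} [TopologicalSpace M] {f : M → M} (W : WDS M f) :
    Set (M × M × M) :=
  {p | ∃ a b c : W.K, CircBtw (a : UnitAddCircle) (b : UnitAddCircle) (c : UnitAddCircle) ∧ p = (W.j a, W.j b, W.j c)}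

/-- The reverse of the order graph of a WDS. -/
def WDS.revGraph {M : Type*} [TopologicalSpace M] {f : M → M} (W : WDS M f) :
    Set (M × M × M) :=
  {p | (p.2.2, p.2.1, p.1) ∈ W.orderGraph}


local notation "𝕋" => UnitAddCircle

namespace WDSAux

lemma tcoe_add (x y : ℝ) : ((x + y : ℝ) : 𝕋) = (x : 𝕋) + (y : 𝕋) := rfl

lemma tcoe_neg (x : ℝ) : ((-x : ℝ) : 𝕋) = -(x : 𝕋) := rfl

lemma tcoe_one : ((1 : ℝ) : 𝕋) = 0 := by
  simpa using AddCircle.coe_period (p := (1:ℝ))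

lemma tcoe_int (m : ℤ) : ((m : ℝ) : 𝕋) = 0 := by
  have h1 : ((m:ℝ) : 𝕋) = ((m • (1:ℝ) : ℝ) : 𝕋) := by norm_num
  rw [h1, QuotientAddGroup.mk_zsmul, tcoe_one, smul_zero]

lemma tcoe_eq_iff {x y : ℝ} : (x : 𝕋) = (y : 𝕋) ↔ ∃ m : ℤ, y = x + m := by
  constructor
  · intro h
    obtain ⟨m, hm⟩ : (y - x : ℝ) ∈ AddSubgroup.zmultiples (1:ℝ) := by
      have := QuotientAddGroup.eq.1 h
      simpa [neg_add_eq_sub] using this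
    have hm' : (m : ℝ) = y - x := by simpa using hm
    exact ⟨m, by linarith⟩
  · rintro ⟨m, rfl⟩
    rw [tcoe_add, tcoe_int, add_zero]

lemma exists_lift (a : 𝕋) : ∃ x : ℝ, (x : 𝕋) = a := Quotient.exists_rep a

lemma exists_lift_Ico (a : 𝕋) (t : ℝ) : ∃ x : ℝ, x ∈ Ico t (t + 1) ∧ (x : 𝕋) = a := by
  haveI : Fact ((0:ℝ) < 1) := ⟨one_pos⟩
  refine ⟨((AddCircle.equivIco 1 t) a : ℝ), ((AddCircle.equivIco 1 t) a).2, ?_⟩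
  exact (AddCircle.equivIco 1 t).symm_apply_apply a

lemma lift_unique {x y : ℝ} (h : (x : 𝕋) = (y : 𝕋)) (h2 : |y - x| < 1) : y = x := by
  obtain ⟨m, rfl⟩ := tcoe_eq_iff.1 h
  have h3 : |(m:ℝ)| < 1 := by simpa using h2
  rw [← Int.cast_abs] at h3
  have h4 : |m| < 1 := by exact_mod_cast h3
  have : m = 0 := by rwa [Int.abs_lt_one_iff] at h4
  simp [this]

/-- Strict cyclic betweenness. -/
def SBtw (a b c : 𝕋) : Prop :=
  ∃ s t : ℝ, 0 < s ∧ s < t ∧ t < 1 ∧ b = a + (s : ℝ) ∧ c = a + (t : ℝ)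

lemma tcoe_ne_zero_of_Ioo {s : ℝ} (h : s ∈ Ioo (0:ℝ) 1) : ((s : ℝ) : 𝕋) ≠ 0 := by
  intro hc
  have : ((0:ℝ) : 𝕋) = ((s:ℝ) : 𝕋) := by simpa using hc.symm
  obtain ⟨m, hm⟩ := tcoe_eq_iff.1 this
  simp only [zero_add] at hm
  rcases h with ⟨h1, h2⟩
  have : (0:ℝ) < m := by rw [← hm]; exact h1
  have : (m:ℝ) < 1 := by rw [← hm]; exact h2
  have h0 : (0:ℤ) < m := by exact_mod_cast ‹(0:ℝ) < m›
  have h1' : m < 1 := by exact_mod_cast ‹(m:ℝ) < 1›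
  omega

lemma SBtw.ne₁₂ {a b c : 𝕋} (h : SBtw a b c) : a ≠ b := by
  obtain ⟨s, t, hs, hst, ht, hb, _⟩ := h
  intro hab; rw [hb] at hab
  exact tcoe_ne_zero_of_Ioo ⟨hs, hst.trans ht⟩ (by
    have := hab.symm; rwa [add_eq_left] at this)

lemma SBtw.ne₂₃ {a b c : 𝕋} (h : SBtw a b c) : b ≠ c := by
  obtain ⟨s, t, hs, hst, ht, hb, hc⟩ := h
  intro hbc; rw [hb, hc] at hbc
  have : ((s:ℝ):𝕋) = ((t:ℝ):𝕋) := by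
    have := add_left_cancel hbc; exact this
  obtain ⟨m, hm⟩ := tcoe_eq_iff.1 this
  have hm' : t - s = (m:ℝ) := by linarith
  have h1 : (0:ℝ) < m := by rw [← hm']; linarith
  have h2 : (m:ℝ) < 1 := by rw [← hm']; linarith
  have h0 : (0:ℤ) < m := by exact_mod_cast h1
  have h1' : m < 1 := by exact_mod_cast h2
  omega

lemma SBtw.ne₁₃ {a b c : 𝕋} (h : SBtw a b c) : a ≠ c := by
  obtain ⟨s, t, hs, hst, ht, _, hc⟩ := h
  intro hac; rw [hc] at hac
  exact tcoe_ne_zero_of_Ioo ⟨hs.trans hst, ht⟩ (by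
    have := hac.symm; rwa [add_eq_left] at this)

lemma SBtw.btw {a b c : 𝕋} (h : SBtw a b c) : CircBtw a b c := by
  obtain ⟨s, t, hs, hst, ht, hb, hc⟩ := h
  obtain ⟨x, hx⟩ := exists_lift a
  exact ⟨x, x + s, x + t, hx, by rw [tcoe_add, hx, hb], by rw [tcoe_add, hx, hc],
    by linarith, by linarith, by linarith⟩

lemma SBtw.cyclic {a b c : 𝕋} (h : SBtw a b c) : SBtw b c a := by
  obtain ⟨s, t, hs, hst, ht, hb, hc⟩ := h
  refine ⟨t - s, 1 - s, by linarith, by linarith, by linarith, ?_, ?_⟩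
  · rw [hb, hc]; rw [show (t:ℝ) = s + (t - s) by ring, tcoe_add]; abel
  · rw [hb, show ((1 - s : ℝ) : 𝕋) = -((s:ℝ):𝕋) by
      rw [show (1 - s : ℝ) = 1 + (-s) by ring, tcoe_add, tcoe_one, tcoe_neg, zero_add]]
    abel

lemma sbtw_of_btw_ne {a b c : 𝕋} (h : CircBtw a b c) (h1 : a ≠ b) (h2 : b ≠ c) (h3 : a ≠ c) :
    SBtw a b c := by
  obtain ⟨x, y, z, hx, hy, hz, hxy, hyz, hzx⟩ := h
  have hxy' : x < y := lt_of_le_of_ne hxy (by rintro rfl; exact h1 (hx.symm.trans hy))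
  have hyz' : y < z := lt_of_le_of_ne hyz (by rintro rfl; exact h2 (hy.symm.trans hz))
  have hzx' : z < x + 1 := lt_of_le_of_ne hzx (by
    rintro rfl
    exact h3 (by rw [← hx, ← hz, tcoe_add, tcoe_one, add_zero]))
  refine ⟨y - x, z - x, by linarith, by linarith, by linarith, ?_, ?_⟩
  · rw [← hx, ← hy, ← tcoe_add]; norm_num
  · rw [← hx, ← hz, ← tcoe_add]; norm_num

lemma sbtw_asymm {a b c : 𝕋} (h : SBtw a b c) (h' : SBtw c b a) : False := by
  obtain ⟨s, t, hs, hst, ht, hb, hc⟩ := h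
  obtain ⟨s', t', hs', hst', ht', hb', ha'⟩ := h'
  -- a = c + t', c = a + t  ⇒ t + t' ∈ ℤ, t+t' ∈ (0,2) ⇒ = 1
  have hA : a = a + ((t + t' : ℝ) : 𝕋) := by
    conv_lhs => rw [ha', hc]
    rw [tcoe_add]; abel
  have h1 : ∃ m : ℤ, t + t' = m := by
    have : ((0:ℝ) : 𝕋) = ((t + t' : ℝ) : 𝕋) := by
      have := (add_eq_left (a := a)).1 hA.symm
      simpa using this.symm
    obtain ⟨m, hm⟩ := tcoe_eq_iff.1 this
    exact ⟨m, by linarith⟩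
  obtain ⟨m, hm⟩ := h1
  have hm1 : (m:ℝ) = 1 := by
    have h0 : (0:ℝ) < m := by rw [← hm]; linarith
    have h2 : (m:ℝ) < 2 := by rw [← hm]; linarith
    have i0 : (0:ℤ) < m := by exact_mod_cast h0
    have i2 : m < 2 := by exact_mod_cast h2
    have i1 : m = 1 := by omega
    rw [i1]; norm_num
  -- b = a + s and b = c + s' = a + (t + s')
  have hB : a + ((s:ℝ):𝕋) = a + ((t + s' : ℝ):𝕋) := by
    rw [← hb, hb', hc, tcoe_add]; abel
  obtain ⟨k, hk⟩ := tcoe_eq_iff.1 (add_left_cancel hB)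
  -- t + s' = s + k with s < t, s' > 0 ⇒ k > 0 ⇒ k ≥ 1 ⇒ t + s' ≥ s + 1, but s' < t' = 1 + ... 
  have hk0 : (0:ℝ) < k := by linarith
  have hk1 : (1:ℤ) ≤ k := by exact_mod_cast (by exact_mod_cast hk0 : (0:ℤ) < k)
  have hk1' : (1:ℝ) ≤ k := by exact_mod_cast hk1
  -- s' < t' and t + t' = 1 ⇒ t + s' < 1 ≤ s + k = t + s', contradiction
  nlinarith [hst', hm, hk, hm1]

lemma sbtw_total {a b c : 𝕋} (h1 : a ≠ b) (h2 : b ≠ c) (h3 : a ≠ c) :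
    SBtw a b c ∨ SBtw c b a := by
  obtain ⟨x, hx⟩ := exists_lift a
  obtain ⟨y, hy, hyx⟩ := exists_lift_Ico b x
  obtain ⟨z, hz, hzx⟩ := exists_lift_Ico c x
  have hy0 : x < y := lt_of_le_of_ne hy.1 (by rintro rfl; exact h1 (hx.symm.trans hyx))
  have hz0 : x < z := lt_of_le_of_ne hz.1 (by rintro rfl; exact h3 (hx.symm.trans hzx))
  have hyz : y ≠ z := by rintro rfl; exact h2 (hyx.symm.trans hzx)
  rcases lt_or_gt_of_ne hyz with hlt | hgt
  · left
    exact ⟨y - x, z - x, by linarith, by linarith, by linarith [hz.2],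
      by rw [← hyx, ← hx, ← tcoe_add]; norm_num,
      by rw [← hzx, ← hx, ← tcoe_add]; norm_num⟩
  · right
    have : SBtw a c b := ⟨z - x, y - x, by linarith, by linarith, by linarith [hy.2],
      by rw [← hzx, ← hx, ← tcoe_add]; norm_num,
      by rw [← hyx, ← hx, ← tcoe_add]; norm_num⟩
    exact this.cyclic

lemma btw_degen₁ (a b : 𝕋) : CircBtw a a b := by
  obtain ⟨x, hx⟩ := exists_lift a
  obtain ⟨y, hy, hyx⟩ := exists_lift_Ico b x
  exact ⟨x, x, y, hx, hx, hyx, le_refl _, hy.1, le_of_lt hy.2⟩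

lemma btw_degen₂ (a b : 𝕋) : CircBtw a b b := by
  obtain ⟨x, hx⟩ := exists_lift a
  obtain ⟨y, hy, hyx⟩ := exists_lift_Ico b x
  exact ⟨x, y, y, hx, hyx, hyx, hy.1, le_refl _, le_of_lt hy.2⟩

lemma btw_degen₃ (a b : 𝕋) : CircBtw a b a := by
  obtain ⟨x, hx⟩ := exists_lift a
  obtain ⟨y, hy, hyx⟩ := exists_lift_Ico b x
  exact ⟨x, y, x + 1, hx, hyx, by rw [tcoe_add, tcoe_one, add_zero]; exact hx,
    hy.1, le_of_lt hy.2, le_refl _⟩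

lemma btw_cyclic {a b c : 𝕋} (h : CircBtw a b c) : CircBtw b c a := by
  obtain ⟨x, y, z, hx, hy, hz, hxy, hyz, hzx⟩ := h
  exact ⟨y, z, x + 1, hy, hz, by rw [tcoe_add, tcoe_one, add_zero]; exact hx,
    hyz, hzx, by linarith⟩

lemma btw_neg {a b c : 𝕋} (h : CircBtw a b c) : CircBtw (-c) (-b) (-a) := by
  obtain ⟨x, y, z, hx, hy, hz, hxy, hyz, hzx⟩ := h
  exact ⟨-z, -y, -x, by rw [tcoe_neg, hz], by rw [tcoe_neg, hy], by rw [tcoe_neg, hx],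
    by linarith, by linarith, by linarith⟩

lemma sbtw_neg {a b c : 𝕋} (h : SBtw a b c) : SBtw (-c) (-b) (-a) := by
  obtain ⟨s, t, hs, hst, ht, hb, hc⟩ := h
  refine ⟨t - s, t, by linarith, by linarith, ht, ?_, ?_⟩
  · rw [hb, hc, show (t:ℝ) = s + (t - s) by ring, tcoe_add]; abel
  · rw [hc]; abel




lemma tcont : Continuous ((↑) : ℝ → 𝕋) := continuous_quotient_mk'

lemma topen : IsOpenMap ((↑) : ℝ → 𝕋) := QuotientAddGroup.isOpenMap_coe

/-- The set of positively oriented triples. -/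
def Tpos : Set (𝕋 × 𝕋 × 𝕋) := {p | SBtw p.1 p.2.1 p.2.2}

/-- The set of negatively oriented triples. -/
def Tneg : Set (𝕋 × 𝕋 × 𝕋) := {p | SBtw p.2.2 p.2.1 p.1}

lemma isOpen_Tpos : IsOpen Tpos := by
  have hP : IsOpen ((fun q : ℝ × ℝ => ((q.1 : 𝕋), (q.2 : 𝕋))) ''
      {q : ℝ × ℝ | 0 < q.1 ∧ q.1 < q.2 ∧ q.2 < 1}) := by
    apply (topen.prodMap topen)
    exact (isOpen_lt continuous_const continuous_fst).inter
      ((isOpen_lt continuous_fst continuous_snd).inter (isOpen_lt continuous_snd continuous_const))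
  have hθ : Continuous (fun p : 𝕋 × 𝕋 × 𝕋 => (p.2.1 - p.1, p.2.2 - p.1)) := by
    exact ((continuous_fst.comp continuous_snd).sub continuous_fst).prodMk
      ((continuous_snd.comp continuous_snd).sub continuous_fst)
  have : Tpos = (fun p : 𝕋 × 𝕋 × 𝕋 => (p.2.1 - p.1, p.2.2 - p.1)) ⁻¹'
      ((fun q : ℝ × ℝ => ((q.1 : 𝕋), (q.2 : 𝕋))) '' {q : ℝ × ℝ | 0 < q.1 ∧ q.1 < q.2 ∧ q.2 < 1}) := by
    ext ⟨A, B, C⟩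
    constructor
    · rintro ⟨s, t, hs, hst, ht, hb, hc⟩
      refine ⟨(s, t), ⟨hs, hst, ht⟩, ?_⟩
      simp only [Prod.mk.injEq]
      exact ⟨by rw [show B = A + ((s:ℝ):𝕋) from hb]; abel, by rw [show C = A + ((t:ℝ):𝕋) from hc]; abel⟩
    · rintro ⟨⟨s, t⟩, ⟨hs, hst, ht⟩, heq⟩
      simp only [Prod.mk.injEq] at heq
      exact ⟨s, t, hs, hst, ht, by rw [heq.1]; abel, by rw [heq.2]; abel⟩
  rw [this]
  exact hP.preimage hθ

lemma isOpen_Tneg : IsOpen Tneg := by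
  have : Tneg = (fun p : 𝕋 × 𝕋 × 𝕋 => (p.2.2, p.2.1, p.1)) ⁻¹' Tpos := rfl
  rw [this]
  exact isOpen_Tpos.preimage (by fun_prop)

lemma isPreconnected_Tpos : IsPreconnected Tpos := by
  have hR : Convex ℝ {q : ℝ × ℝ × ℝ | 0 < q.2.1 ∧ q.2.1 < q.2.2 ∧ q.2.2 < 1} := by
    have h1 : Convex ℝ {q : ℝ × ℝ × ℝ | 0 < q.2.1} :=
      convex_halfSpace_gt (⟨fun a b => rfl, fun c a => rfl⟩ : IsLinearMap ℝ fun q : ℝ × ℝ × ℝ => q.2.1) 0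
    have h2 : Convex ℝ {q : ℝ × ℝ × ℝ | q.2.1 - q.2.2 < 0} :=
      convex_halfSpace_lt (⟨fun a b => by simp; ring, fun c a => by simp; ring⟩ :
        IsLinearMap ℝ fun q : ℝ × ℝ × ℝ => q.2.1 - q.2.2) 0
    have h3 : Convex ℝ {q : ℝ × ℝ × ℝ | q.2.2 < 1} :=
      convex_halfSpace_lt (⟨fun a b => rfl, fun c a => rfl⟩ : IsLinearMap ℝ fun q : ℝ × ℝ × ℝ => q.2.2) 1
    have : {q : ℝ × ℝ × ℝ | 0 < q.2.1 ∧ q.2.1 < q.2.2 ∧ q.2.2 < 1} =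
        {q : ℝ × ℝ × ℝ | 0 < q.2.1} ∩ ({q : ℝ × ℝ × ℝ | q.2.1 - q.2.2 < 0} ∩ {q : ℝ × ℝ × ℝ | q.2.2 < 1}) := by
      ext q; simp [sub_neg]
    rw [this]
    exact h1.inter (h2.inter h3)
  have hΨ : Continuous (fun q : ℝ × ℝ × ℝ => (((q.1 : ℝ) : 𝕋), ((q.1 : ℝ) : 𝕋) + ((q.2.1 : ℝ) : 𝕋),
      ((q.1 : ℝ) : 𝕋) + ((q.2.2 : ℝ) : 𝕋))) := by
    have c1 : Continuous (fun q : ℝ × ℝ × ℝ => ((q.1 : ℝ) : 𝕋)) := tcont.comp continuous_fst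
    have c2 : Continuous (fun q : ℝ × ℝ × ℝ => ((q.2.1 : ℝ) : 𝕋)) :=
      tcont.comp (continuous_fst.comp continuous_snd)
    have c3 : Continuous (fun q : ℝ × ℝ × ℝ => ((q.2.2 : ℝ) : 𝕋)) :=
      tcont.comp (continuous_snd.comp continuous_snd)
    exact c1.prodMk ((c1.add c2).prodMk (c1.add c3))
  have himg : Tpos = (fun q : ℝ × ℝ × ℝ => (((q.1 : ℝ) : 𝕋), ((q.1 : ℝ) : 𝕋) + ((q.2.1 : ℝ) : 𝕋),
      ((q.1 : ℝ) : 𝕋) + ((q.2.2 : ℝ) : 𝕋))) '' {q : ℝ × ℝ × ℝ | 0 < q.2.1 ∧ q.2.1 < q.2.2 ∧ q.2.2 < 1} := by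
    ext ⟨A, B, C⟩
    constructor
    · rintro ⟨s, t, hs, hst, ht, hb, hc⟩
      obtain ⟨x, hx⟩ := exists_lift A
      refine ⟨(x, s, t), ⟨hs, hst, ht⟩, ?_⟩
      simp only [Prod.mk.injEq]
      exact ⟨hx, by rw [hx, ← hb], by rw [hx, ← hc]⟩
    · rintro ⟨⟨x, s, t⟩, ⟨hs, hst, ht⟩, heq⟩
      rw [← heq]
      exact ⟨s, t, hs, hst, ht, rfl, rfl⟩
  rw [himg]
  exact (hR.isPreconnected).image _ hΨ.continuousOn

/-- Orientation dichotomy for continuous injective self-maps of the circle. -/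
lemma dichotomy {g : 𝕋 → 𝕋} (hg : Continuous g) (hinj : Function.Injective g) :
    (∀ a b c : 𝕋, SBtw a b c → SBtw (g a) (g b) (g c)) ∨
    (∀ a b c : 𝕋, SBtw a b c → SBtw (g c) (g b) (g a)) := by
  set G3 : 𝕋 × 𝕋 × 𝕋 → 𝕋 × 𝕋 × 𝕋 := fun p => (g p.1, g p.2.1, g p.2.2) with hG3
  have hG3c : Continuous G3 := by fun_prop
  have hsub : G3 '' Tpos ⊆ Tpos ∪ Tneg := by
    rintro _ ⟨p, hp, rfl⟩
    have h := hp
    have d12 : g p.1 ≠ g p.2.1 := fun e => h.ne₁₂ (hinj e)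
    have d23 : g p.2.1 ≠ g p.2.2 := fun e => h.ne₂₃ (hinj e)
    have d13 : g p.1 ≠ g p.2.2 := fun e => h.ne₁₃ (hinj e)
    rcases sbtw_total d12 d23 d13 with h' | h'
    · exact Or.inl h'
    · exact Or.inr h'
  have hdisj : Disjoint Tpos Tneg := by
    rw [Set.disjoint_left]
    intro p hp hn
    exact sbtw_asymm hp hn
  rcases IsPreconnected.subset_or_subset isOpen_Tpos isOpen_Tneg hdisj hsub
      (isPreconnected_Tpos.image G3 hG3c.continuousOn) with hcase | hcase
  · left
    intro a b c hs
    exact hcase ⟨(a, b, c), hs, rfl⟩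
  · right
    intro a b c hs
    exact hcase ⟨(a, b, c), hs, rfl⟩

end WDSAux

namespace WDSAux

variable (D : DenjoySystem)

/-- The lift as a `CircleDeg1Lift`. -/
def F : CircleDeg1Lift := CircleDeg1Lift.mk ⟨D.lift, D.lift_mono.monotone⟩ D.lift_add

lemma F_coe : ⇑(F D) = D.lift := rfl

lemma tau_F : (F D).translationNumber = D.rot := by
  have h1 := (F D).tendsto_translation_number₀
  have h2 : ∀ n : ℕ, ((F D) ^ n) 0 = D.lift^[n] 0 := fun n => by
    rw [CircleDeg1Lift.coe_pow]; rfl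
  refine tendsto_nhds_unique ?_ D.rot_lim
  exact h1.congr (fun n => by rw [h2])

lemma translate_bij : Function.Bijective ⇑((CircleDeg1Lift.translate (Multiplicative.ofAdd D.rot) : CircleDeg1Liftˣ) : CircleDeg1Lift) :=
  CircleDeg1Lift.isUnit_iff_bijective.1 ⟨_, rfl⟩

/-- The semiconjugacy to the rotation. -/
def piF : CircleDeg1Lift :=
  Classical.choose (CircleDeg1Lift.semiconj_of_bijective_of_translationNumber_eq
    (f₁ := F D) (f₂ := (CircleDeg1Lift.translate (Multiplicative.ofAdd D.rot) : CircleDeg1Liftˣ))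
    D.lift_bij (translate_bij D)
    (by rw [tau_F, CircleDeg1Lift.translationNumber_translate]))

lemma piF_semiconj : ∀ x : ℝ, piF D (D.lift x) = D.rot + piF D x := by
  have h := Classical.choose_spec (CircleDeg1Lift.semiconj_of_bijective_of_translationNumber_eq
    (f₁ := F D) (f₂ := (CircleDeg1Lift.translate (Multiplicative.ofAdd D.rot) : CircleDeg1Liftˣ))
    D.lift_bij (translate_bij D)
    (by rw [tau_F, CircleDeg1Lift.translationNumber_translate]))
  intro x
  have := h x
  simp [CircleDeg1Lift.translate_apply] at this
  exact this

/-- The subgroup generated by 1 and the rotation number. -/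
def SG : AddSubgroup ℝ := AddSubgroup.closure {1, D.rot}

lemma SG_dense : Dense (SG D : Set ℝ) := by
  rcases AddSubgroup.dense_or_cyclic (SG D) with h | ⟨r, hr⟩
  · exact h
  · exfalso
    have h1 : (1:ℝ) ∈ SG D := AddSubgroup.subset_closure (by simp)
    have h2 : D.rot ∈ SG D := AddSubgroup.subset_closure (by simp)
    rw [hr] at h1 h2
    obtain ⟨m, hm⟩ := AddSubgroup.mem_closure_singleton.1 h1
    obtain ⟨n, hn⟩ := AddSubgroup.mem_closure_singleton.1 h2
    have hm0 : m ≠ 0 := by rintro rfl; simp at hm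
    apply D.rot_irr
    refine ⟨(n : ℚ) / (m : ℚ), ?_⟩
    have hmr : (m:ℝ) * r = 1 := by rw [← hm]; simp [zsmul_eq_mul]
    have hnr : (n:ℝ) * r = D.rot := by rw [← hn]; simp [zsmul_eq_mul]
    have hmne : (m:ℝ) ≠ 0 := Int.cast_ne_zero.2 hm0
    push_cast
    rw [div_eq_iff hmne]
    have hrval : r = 1 / (m:ℝ) := by field_simp at hmr ⊢; linarith
    rw [← hnr, hrval]
    field_simp

lemma range_shift : ∀ s ∈ SG D, ∀ y : ℝ, y ∈ Set.range (piF D) ↔ y + s ∈ Set.range (piF D) := by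
  intro s hs
  induction hs using AddSubgroup.closure_induction with
  | mem x hx =>
    rcases hx with h1 | hrot
    · subst h1
      intro y
      constructor
      · rintro ⟨x, rfl⟩; exact ⟨x + 1, (piF D).map_add_one x⟩
      · rintro ⟨x, hx⟩
        refine ⟨x - 1, ?_⟩
        have := (piF D).map_sub_int x 1
        rw [show ((1:ℤ):ℝ) = (1:ℝ) by norm_num] at this
        rw [this, hx]; ring
    · subst hrot
      intro y
      constructor
      · rintro ⟨x, rfl⟩
        exact ⟨D.lift x, by rw [piF_semiconj]; ring⟩
      · rintro ⟨z, hz⟩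
        obtain ⟨x, rfl⟩ := D.lift_bij.2 z
        rw [piF_semiconj] at hz
        exact ⟨x, by linarith⟩
  | zero => intro y; simp
  | add x z _ _ ihx ihz =>
    intro y
    rw [ihx y, ihz (y + x), add_assoc]
  | neg x _ ihx =>
    intro y
    have h' := ihx (y + -x)
    rw [show y + -x + x = y by ring] at h'
    exact h'.symm

lemma piF_surj : Function.Surjective (piF D) := by
  by_contra hns
  simp only [Function.Surjective, not_forall] at hns
  obtain ⟨c, hc⟩ := hns
  set π := piF D
  have hcr : c ∉ Set.range π := by rintro ⟨x, hx⟩; exact hc ⟨x, hx⟩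
  set A := {x : ℝ | π x < c} with hA
  set B := {x : ℝ | c < π x} with hB
  have hAne : A.Nonempty := by
    have := (π.tendsto_atBot).eventually (eventually_lt_atBot c)
    obtain ⟨x, hx⟩ := this.exists
    exact ⟨x, hx⟩
  have hBne : B.Nonempty := by
    have := (π.tendsto_atTop).eventually (eventually_gt_atTop c)
    obtain ⟨x, hx⟩ := this.exists
    exact ⟨x, hx⟩
  have htri : ∀ x, x ∈ A ∨ x ∈ B := by
    intro x
    rcases lt_trichotomy (π x) c with h | h | h
    · exact Or.inl h
    · exact absurd ⟨x, h⟩ hcr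
    · exact Or.inr h
  have hbdd : BddAbove A := by
    obtain ⟨b, hb⟩ := hBne
    refine ⟨b, fun x hx => ?_⟩
    by_contra hxb
    push_neg at hxb
    have : π b ≤ π x := π.monotone hxb.le
    exact absurd (lt_of_le_of_lt this hx) (not_lt.2 hb.le)
  set a := sSup A
  have hiAne : (π '' A).Nonempty := hAne.image _
  have hiBne : (π '' B).Nonempty := hBne.image _
  have hiAbdd : BddAbove (π '' A) := ⟨c, by rintro _ ⟨x, hx, rfl⟩; exact hx.le⟩
  have hiBbdd : BddBelow (π '' B) := ⟨c, by rintro _ ⟨x, hx, rfl⟩; exact hx.le⟩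
  set u := sSup (π '' A)
  set v := sInf (π '' B)
  have hu : u ≤ c := csSup_le hiAne (by rintro _ ⟨x, hx, rfl⟩; exact hx.le)
  have hv : c ≤ v := le_csInf hiBne (by rintro _ ⟨x, hx, rfl⟩; exact hx.le)
  have key : u < c ∨ c < v := by
    by_contra hk
    push_neg at hk
    have hu' : u = c := le_antisymm hu hk.1
    have hv' : v = c := le_antisymm hk.2 hv
    rcases lt_trichotomy (π a) c with h | h | h
    · have : u ≤ π a := csSup_le hiAne (by
        rintro _ ⟨x, hx, rfl⟩
        exact π.monotone (le_csSup hbdd hx))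
      linarith [hu'.symm ▸ this]
    · exact hcr ⟨a, h⟩
    · have hmem : ∀ x ∈ B, a ≤ x := by
        intro x hx
        by_contra hxa
        push_neg at hxa
        obtain ⟨y, hy, hxy⟩ := exists_lt_of_lt_csSup hAne hxa
        have : π x ≤ π y := π.monotone hxy.le
        have : π x < c := lt_of_le_of_lt this hy
        exact absurd hx (not_lt.2 this.le)
      have : π a ≤ v := le_csInf hiBne (by
        rintro _ ⟨x, hx, rfl⟩
        exact π.monotone (hmem x hx))
      linarith [hv' ▸ this]
  -- in both cases, an open interval disjoint from the range
  obtain ⟨l, r, hlr, hdisj⟩ : ∃ l r : ℝ, l < r ∧ ∀ w : ℝ, π w ∉ Set.Ioo l r := by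
    rcases key with h | h
    · refine ⟨u, c, h, fun w hw => ?_⟩
      rcases htri w with hwA | hwB
      · exact absurd (le_csSup hiAbdd ⟨w, hwA, rfl⟩) (not_le.2 hw.1)
      · exact absurd hw.2 (not_lt.2 hwB.le)
    · refine ⟨c, v, h, fun w hw => ?_⟩
      rcases htri w with hwA | hwB
      · exact absurd hw.1 (not_lt.2 hwA.le)
      · exact absurd (csInf_le hiBbdd ⟨w, hwB, rfl⟩) (not_le.2 hw.2)
  set y0 := π 0
  have : ∃ s ∈ (SG D : Set ℝ), s ∈ Set.Ioo (l - y0) (r - y0) := by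
    have hne : (Set.Ioo (l - y0) (r - y0)).Nonempty := ⟨(l - y0 + (r - y0))/2, by constructor <;> linarith⟩
    obtain ⟨s, hs1, hs2⟩ := (SG_dense D).exists_mem_open isOpen_Ioo hne
    exact ⟨s, hs1, hs2⟩
  obtain ⟨s, hsSG, hs⟩ := this
  have : y0 + s ∈ Set.range π := (range_shift D s hsSG y0).1 ⟨0, rfl⟩
  obtain ⟨w, hw⟩ := this
  exact hdisj w (by rw [hw]; constructor <;> [linarith [hs.1]; linarith [hs.2]])

lemma piF_cont : Continuous (piF D) := (piF D).continuous_iff_surjective.2 (piF_surj D)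

/-- The induced map on the circle. -/
def pbar : 𝕋 → 𝕋 :=
  Quotient.map' (piF D) (by
    intro x y hxy
    rw [QuotientAddGroup.leftRel_apply] at hxy ⊢
    obtain ⟨m, hm⟩ := hxy
    have hm' : (m:ℝ) = -x + y := by simpa using hm
    have hyx : y = x + (m:ℝ) := by linarith
    refine AddSubgroup.mem_zmultiples_iff.mpr ⟨m, ?_⟩
    have hmai := (piF D).map_add_int x m
    rw [hyx, hmai]
    simp only [zsmul_eq_mul, mul_one]
    ring)

lemma pbar_coe (x : ℝ) : pbar D ((x:ℝ) : 𝕋) = ((piF D x : ℝ) : 𝕋) := rfl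

lemma pbar_cont : Continuous (pbar D) := by
  have h : IsQuotientMap ((↑) : ℝ → 𝕋) := by
    refine topen.isQuotientMap tcont (fun a => exists_lift a)
  rw [h.continuous_iff]
  exact tcont.comp (piF_cont D)

lemma pbar_equivar (a : 𝕋) : pbar D (D.h a) = pbar D a + ((D.rot : ℝ) : 𝕋) := by
  obtain ⟨x, rfl⟩ := exists_lift a
  rw [← D.lift_proj, pbar_coe, pbar_coe, piF_semiconj]
  rw [show D.rot + piF D x = piF D x + D.rot by ring, tcoe_add]

end WDSAux

namespace WDSAux

variable (D : DenjoySystem)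

def Funit : CircleDeg1Liftˣ := ((CircleDeg1Lift.isUnit_iff_bijective (f := F D)).2 D.lift_bij).unit

def L : ℝ ≃o ℝ := CircleDeg1Lift.toOrderIso (Funit D)

lemma L_apply (x : ℝ) : L D x = D.lift x := by
  have h := CircleDeg1Lift.coe_toOrderIso (Funit D)
  have h2 : ((Funit D : CircleDeg1Liftˣ) : CircleDeg1Lift) = F D :=
    ((CircleDeg1Lift.isUnit_iff_bijective (f := F D)).2 D.lift_bij).unit_spec
  calc L D x = ((Funit D : CircleDeg1Liftˣ) : CircleDeg1Lift) x := by rw [L, h]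
  _ = D.lift x := by rw [h2]; rfl

lemma L_inv_lift (x : ℝ) : (L D)⁻¹ (D.lift x) = x := by
  have : (L D)⁻¹ (L D x) = x := (L D).symm_apply_apply x
  rwa [L_apply] at this

lemma piF_L_inv (x : ℝ) : piF D ((L D)⁻¹ x) = piF D x - D.rot := by
  have h := piF_semiconj D ((L D)⁻¹ x)
  have h2 : D.lift ((L D)⁻¹ x) = x := by
    have := (L D).apply_symm_apply x
    rwa [L_apply] at this
  rw [h2] at h
  linarith

lemma zpow_facts : ∀ n : ℤ, ∀ x : ℝ,
    (D.h.toEquiv ^ n) ((x : ℝ) : 𝕋) = (((L D ^ n) x : ℝ) : 𝕋) ∧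
    piF D ((L D ^ n) x) = n * D.rot + piF D x := by
  intro n
  induction n using Int.induction_on with
  | zero => intro x; simp
  | succ k ih =>
    intro x
    have e1 : ((D.h.toEquiv : Equiv.Perm 𝕋) ^ ((k : ℤ) + 1)) ((x : ℝ) : 𝕋)
        = ((D.h.toEquiv : Equiv.Perm 𝕋) ^ (k : ℤ)) (D.h.toEquiv ((x : ℝ) : 𝕋)) := by
      rw [zpow_add_one, Equiv.Perm.mul_apply]
    have e2 : (L D ^ ((k : ℤ) + 1)) x = (L D ^ (k : ℤ)) (L D x) := by
      rw [zpow_add_one]; rfl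
    have hx : D.h.toEquiv ((x : ℝ) : 𝕋) = ((D.lift x : ℝ) : 𝕋) := (D.lift_proj x).symm
    constructor
    · rw [e1, e2, hx, (ih (D.lift x)).1, L_apply]
    · rw [e2, L_apply, (ih (D.lift x)).2, piF_semiconj]
      push_cast; ring
  | pred k ih =>
    intro x
    have e1 : ((D.h.toEquiv : Equiv.Perm 𝕋) ^ (-(k : ℤ) - 1)) ((x : ℝ) : 𝕋)
        = ((D.h.toEquiv : Equiv.Perm 𝕋) ^ (-(k : ℤ))) ((D.h.toEquiv)⁻¹ ((x : ℝ) : 𝕋)) := by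
      rw [zpow_sub_one, Equiv.Perm.mul_apply]
    have e2 : (L D ^ (-(k : ℤ) - 1)) x = (L D ^ (-(k : ℤ))) ((L D)⁻¹ x) := by
      rw [zpow_sub_one]; rfl
    set y := (L D)⁻¹ x with hy
    have hxy : D.lift y = x := by
      have := (L D).apply_symm_apply x
      rwa [L_apply] at this
    have hinv : (D.h.toEquiv)⁻¹ ((x : ℝ) : 𝕋) = ((y : ℝ) : 𝕋) := by
      have : D.h.toEquiv ((y : ℝ) : 𝕋) = ((x : ℝ) : 𝕋) := by
        show D.h _ = _
        rw [← D.lift_proj y, hxy]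
      rw [← this, Equiv.Perm.inv_def, Equiv.symm_apply_apply]
    constructor
    · rw [e1, e2, hinv, (ih y).1]
    · rw [e2, (ih y).2, hy, piF_L_inv]
      push_cast; ring

/-- The key consequence of minimality: an interval with endpoints in the same fiber of the
semiconjugacy and whose left endpoint lies in `K` cannot contain a point of `K` inside. -/
lemma gap_core {u v w : ℝ} (hu : ((u : ℝ) : 𝕋) ∈ D.K) (huv : u < v)
    (hpi : piF D u = piF D v) (hw : w ∈ Ioo u v) (hwK : ((w : ℝ) : 𝕋) ∈ D.K) : False := by
  have hconst : ∀ t ∈ Icc u v, piF D t = piF D u := by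
    intro t ht
    refine le_antisymm ?_ ((piF D).monotone ht.1)
    rw [hpi]; exact (piF D).monotone ht.2
  have hU : IsOpen ((↑) '' Ioo u v : Set 𝕋) := topen _ isOpen_Ioo
  have hmem : ((w : ℝ) : 𝕋) ∈ ((↑) '' Ioo u v : Set 𝕋) := ⟨w, hw, rfl⟩
  have horb := D.K_min _ hu _ hwK
  obtain ⟨z, hz1, hz2⟩ := mem_closure_iff.1 horb _ hU hmem
  obtain ⟨n, hn⟩ := hz2
  obtain ⟨t, ht, htz⟩ := hz1
  have hzf := (zpow_facts D n u).1
  rw [hzf] at hn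
  have : (((L D ^ n) u : ℝ) : 𝕋) = ((t : ℝ) : 𝕋) := by rw [hn, htz]
  obtain ⟨m, hm⟩ := tcoe_eq_iff.1 this
  -- t = (L^n) u + m,  π t = π((L^n) u) + m = n rot + π u + m; also π t = π u
  have hπt : piF D t = piF D u := hconst t ⟨ht.1.le, ht.2.le⟩
  have hπt2 : piF D t = n * D.rot + piF D u + m := by
    rw [hm, (piF D).map_add_int, (zpow_facts D n u).2]
  have hnm : (n : ℝ) * D.rot + m = 0 := by linarith
  have hn0 : n = 0 := by
    by_contra hn0
    apply D.rot_irr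
    refine ⟨(-m : ℚ) / (n : ℚ), ?_⟩
    have hne : (n : ℝ) ≠ 0 := Int.cast_ne_zero.2 hn0
    push_cast
    rw [div_eq_iff hne]
    linarith
  have hm0 : m = 0 := by
    have : (m : ℝ) = 0 := by rw [hn0] at hnm; simpa using hnm
    exact_mod_cast this
  rw [hn0, hm0] at hm
  simp at hm
  rw [hm] at ht
  exact lt_irrefl u ht.1

lemma fiber_gap {a b : 𝕋} (ha : a ∈ D.K) (hb : b ∈ D.K) (hne : a ≠ b)
    (hp : pbar D a = pbar D b) :
    ∃ x y : ℝ, x < y ∧ y < x + 1 ∧ piF D x = piF D y ∧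
      (∀ t ∈ Ioo x y, ((t : ℝ) : 𝕋) ∉ D.K) ∧
      ((((x : ℝ) : 𝕋) = a ∧ ((y : ℝ) : 𝕋) = b) ∨ (((x : ℝ) : 𝕋) = b ∧ ((y : ℝ) : 𝕋) = a)) := by
  obtain ⟨x, hxa⟩ := exists_lift a
  obtain ⟨y, hy, hyb⟩ := exists_lift_Ico b x
  have hxy : x < y := lt_of_le_of_ne hy.1 (by rintro rfl; exact hne (hxa.symm.trans hyb))
  have hy1 : y < x + 1 := hy.2
  rw [← hxa, ← hyb, pbar_coe, pbar_coe] at hp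
  obtain ⟨m, hm⟩ := tcoe_eq_iff.1 hp
  have h0 : piF D x ≤ piF D y := (piF D).monotone hxy.le
  have h1 : piF D y ≤ piF D x + 1 := by
    have := (piF D).monotone hy1.le
    rwa [(piF D).map_add_one] at this
  have hm01 : m = 0 ∨ m = 1 := by
    have l0 : (0:ℝ) ≤ m := by linarith
    have l1 : (m:ℝ) ≤ 1 := by linarith
    have : (0:ℤ) ≤ m := by exact_mod_cast l0
    have : m ≤ 1 := by exact_mod_cast l1
    omega
  rcases hm01 with rfl | rfl
  · refine ⟨x, y, hxy, hy1, by rw [hm]; norm_num, ?_, Or.inl ⟨hxa, hyb⟩⟩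
    intro t ht htK
    exact gap_core D (hxa.symm ▸ ha) hxy (by rw [hm]; norm_num) ht htK
  · refine ⟨y, x + 1, hy1, by linarith, ?_, ?_, Or.inr ⟨hyb, by rw [tcoe_add, tcoe_one, add_zero]; exact hxa⟩⟩
    · rw [(piF D).map_add_one, hm]; norm_num
    · intro t ht htK
      refine gap_core D (hyb.symm ▸ hb) hy1 ?_ ht htK
      rw [(piF D).map_add_one, hm]; norm_num

/-- At most two points of `K` in a fiber of `pbar`. -/
lemma fiber_two {a b c : 𝕋} (ha : a ∈ D.K) (hb : b ∈ D.K) (hc : c ∈ D.K)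
    (hab : a ≠ b) (hbc : b ≠ c) (hac : a ≠ c)
    (h1 : pbar D a = pbar D b) (h2 : pbar D a = pbar D c) : False := by
  obtain ⟨x, hxa⟩ := exists_lift a
  obtain ⟨y, hy, hyb⟩ := exists_lift_Ico b x
  obtain ⟨z, hz, hzc⟩ := exists_lift_Ico c x
  have hxy : x < y := lt_of_le_of_ne hy.1 (by rintro rfl; exact hab (hxa.symm.trans hyb))
  have hxz : x < z := lt_of_le_of_ne hz.1 (by rintro rfl; exact hac (hxa.symm.trans hzc))
  have hyz : y ≠ z := by rintro rfl; exact hbc (hyb.symm.trans hzc)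
  -- reduce to a sorted configuration
  have main : ∀ y z : ℝ, x < y → y < z → z < x + 1 →
      ((y : ℝ) : 𝕋) ∈ D.K → ((z : ℝ) : 𝕋) ∈ D.K →
      pbar D a = pbar D (((y : ℝ) : 𝕋)) → pbar D a = pbar D (((z : ℝ) : 𝕋)) → False := by
    intro y z h1' h2' h3' hyK hzK hpy hpz
    rw [← hxa, pbar_coe, pbar_coe] at hpy hpz
    obtain ⟨my, hmy⟩ := tcoe_eq_iff.1 hpy
    obtain ⟨mz, hmz⟩ := tcoe_eq_iff.1 hpz
    have hKx : ((x : ℝ) : 𝕋) ∈ D.K := hxa.symm ▸ ha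
    have by0 : piF D x ≤ piF D y := (piF D).monotone h1'.le
    have by1 : piF D y ≤ piF D x + 1 := by
      have := (piF D).monotone (show y ≤ x + 1 by linarith)
      rwa [(piF D).map_add_one] at this
    have bz0 : piF D x ≤ piF D z := (piF D).monotone (h1'.trans h2').le
    have bz1 : piF D z ≤ piF D x + 1 := by
      have := (piF D).monotone h3'.le
      rwa [(piF D).map_add_one] at this
    have hmy01 : my = 0 ∨ my = 1 := by
      have l0 : (0:ℝ) ≤ my := by linarith
      have l1 : (my:ℝ) ≤ 1 := by linarith
      have i0 : (0:ℤ) ≤ my := by exact_mod_cast l0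
      have i1 : my ≤ 1 := by exact_mod_cast l1
      omega
    have hmz01 : mz = 0 ∨ mz = 1 := by
      have l0 : (0:ℝ) ≤ mz := by linarith
      have l1 : (mz:ℝ) ≤ 1 := by linarith
      have i0 : (0:ℤ) ≤ mz := by exact_mod_cast l0
      have i1 : mz ≤ 1 := by exact_mod_cast l1
      omega
    rcases hmz01 with rfl | rfl
    · -- π z = π x : the interval [x,z] contains y in its interior
      exact gap_core D hKx (h1'.trans h2') (by rw [hmz]; norm_num) ⟨h1', h2'⟩ hyK
    · rcases hmy01 with rfl | rfl
      · -- π y = π x, π z = π x + 1 = π (y+1): interval [z, y+1] contains x+1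
        have hpi' : piF D z = piF D (y + 1) := by
          rw [(piF D).map_add_one, hmz, hmy]; push_cast; ring
        have hwK' : (((x + 1 : ℝ)) : 𝕋) ∈ D.K := by
          rw [tcoe_add, tcoe_one, add_zero]; exact hKx
        exact gap_core D hzK (show z < y + 1 by linarith) hpi' ⟨h3', by linarith⟩ hwK'
      · -- π y = π x + 1 = π (x+1): interval [y, x+1] contains z
        have hpi' : piF D y = piF D (x + 1) := by
          rw [(piF D).map_add_one, hmy]; push_cast; ring
        exact gap_core D hyK (show y < x + 1 by linarith) hpi' ⟨h2', h3'⟩ hzK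
  rcases lt_or_gt_of_ne hyz with hlt | hgt
  · exact main y z hxy hlt hz.2 (hyb.symm ▸ hb) (hzc.symm ▸ hc)
      (by rw [hyb]; exact h1) (by rw [hzc]; exact h2)
  · exact main z y hxz hgt hy.2 (hzc.symm ▸ hc) (hyb.symm ▸ hb)
      (by rw [hzc]; exact h2) (by rw [hyb]; exact h1)

lemma pbar_surjK : ∀ t : 𝕋, ∃ k ∈ D.K, pbar D k = t := by
  set E := pbar D '' D.K with hEdef
  have hclosed : IsClosed E := (D.K_cpt.image (pbar_cont D)).isClosed
  have hrot : ∀ e, e ∈ E ↔ e + ((D.rot : ℝ) : 𝕋) ∈ E := by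
    intro e
    constructor
    · rintro ⟨k, hk, rfl⟩
      refine ⟨D.h k, ?_, ?_⟩
      · rw [← D.K_inv]; exact ⟨k, hk, rfl⟩
      · rw [pbar_equivar]
    · rintro ⟨k', hk', hk'e⟩
      have : k' ∈ D.h '' D.K := by rw [D.K_inv]; exact hk'
      obtain ⟨k, hk, rfl⟩ := this
      rw [pbar_equivar] at hk'e
      exact ⟨k, hk, add_right_cancel hk'e⟩
  have hQ : ∀ s ∈ SG D, ∀ e : 𝕋, e ∈ E ↔ e + ((s : ℝ) : 𝕋) ∈ E := by
    intro s hs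
    induction hs using AddSubgroup.closure_induction with
    | mem w hw =>
      rcases hw with h1 | hr
      · subst h1; intro e; rw [tcoe_one]; simp
      · subst hr; intro e; exact hrot e
    | zero => intro e; simp [show (((0:ℝ)) : 𝕋) = 0 from rfl]
    | add w w' _ _ ihw ihw' =>
      intro e
      rw [tcoe_add, ← add_assoc]
      exact (ihw e).trans (ihw' (e + ((w : ℝ) : 𝕋)))
    | neg w _ ihw =>
      intro e
      have h' := ihw (e + ((-w : ℝ) : 𝕋))
      rw [tcoe_neg] at h' ⊢
      rw [show e + -((w:ℝ):𝕋) + ((w:ℝ):𝕋) = e by abel] at h'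
      exact h'.symm
  obtain ⟨k0, hk0⟩ := D.K_ne
  set e0 := pbar D k0 with he0
  have hsub : (fun s : ℝ => e0 + ((s : ℝ) : 𝕋)) '' (SG D : Set ℝ) ⊆ E := by
    rintro _ ⟨s, hs, rfl⟩
    exact (hQ s hs e0).1 ⟨k0, hk0, rfl⟩
  have hdense : Dense ((fun s : ℝ => e0 + ((s : ℝ) : 𝕋)) '' (SG D : Set ℝ)) := by
    intro t
    have hq : Continuous (fun s : ℝ => e0 + ((s : ℝ) : 𝕋)) := by
      exact continuous_const.add tcont
    have hqs : Function.Surjective (fun s : ℝ => e0 + ((s : ℝ) : 𝕋)) := by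
      intro t
      obtain ⟨s, hs⟩ := exists_lift (t - e0)
      exact ⟨s, by show e0 + ((s:ℝ):𝕋) = t; rw [hs]; abel⟩
    have : ((fun s : ℝ => e0 + ((s : ℝ) : 𝕋)) '' closure (SG D : Set ℝ)) ⊆
        closure ((fun s : ℝ => e0 + ((s : ℝ) : 𝕋)) '' (SG D : Set ℝ)) :=
      image_closure_subset_closure_image hq
    have hcl : closure (SG D : Set ℝ) = univ := (SG_dense D).closure_eq
    rw [hcl, image_univ] at this
    exact this (hqs.range_eq ▸ mem_univ t)
  have hE : E = univ := by
    have : closure E = univ := by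
      apply eq_univ_of_subset (closure_mono hsub)
      exact hdense.closure_eq
    rwa [hclosed.closure_eq] at this
  intro t
  have : t ∈ E := hE ▸ mem_univ t
  obtain ⟨k, hk, hkt⟩ := this
  exact ⟨k, hk, hkt⟩

lemma pbar_btw {a b c : 𝕋} (h : CircBtw a b c) :
    CircBtw (pbar D a) (pbar D b) (pbar D c) := by
  obtain ⟨x, y, z, hx, hy, hz, hxy, hyz, hzx⟩ := h
  refine ⟨piF D x, piF D y, piF D z, ?_, ?_, ?_, (piF D).monotone hxy, (piF D).monotone hyz, ?_⟩
  · rw [← hx, pbar_coe]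
  · rw [← hy, pbar_coe]
  · rw [← hz, pbar_coe]
  · have := (piF D).monotone hzx
    rwa [(piF D).map_add_one] at this

end WDSAux

namespace WDSAux

/-- Restriction of the circle homeomorphism to the minimal set. -/
def hK (D : DenjoySystem) (x : D.K) : D.K :=
  ⟨D.h x, by
    have h : D.h ↑x ∈ D.h '' D.K := ⟨x, x.2, rfl⟩
    rwa [D.K_inv] at h⟩

lemma hK_coe (D : DenjoySystem) (x : D.K) : ((hK D x : 𝕋)) = D.h x := rfl

lemma hK_iter_coe (D : DenjoySystem) : ∀ (n : ℕ) (u : ℝ) (k : D.K), (k : 𝕋) = ((u:ℝ) : 𝕋) →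
    (((hK D)^[n] k : D.K) : 𝕋) = ((D.lift^[n] u : ℝ) : 𝕋) := by
  intro n
  induction n with
  | zero => intro u k h; simpa using h
  | succ m ih =>
    intro u k h
    rw [Function.iterate_succ_apply, Function.iterate_succ_apply]
    exact ih (D.lift u) (hK D k) (by rw [hK_coe, h, ← D.lift_proj])

section Pair

variable {M : Type*} [MetricSpace M] {f : M → M}

/-- The conjugating map between two WDS with the same image. -/
lemma transfer_ex (W₁ W₂ : WDS M f) (hrange : Set.range W₁.j = Set.range W₂.j) (x : W₁.K) :
    ∃ y : W₂.K, W₂.j y = W₁.j x := by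
  have h : W₁.j x ∈ Set.range W₂.j := by rw [← hrange]; exact Set.mem_range_self x
  exact h

def transfer (W₁ W₂ : WDS M f) (hrange : Set.range W₁.j = Set.range W₂.j) (x : W₁.K) : W₂.K :=
  Classical.choose (transfer_ex W₁ W₂ hrange x)

lemma transfer_spec (W₁ W₂ : WDS M f) (hrange : Set.range W₁.j = Set.range W₂.j) (x : W₁.K) :
    W₂.j (transfer W₁ W₂ hrange x) = W₁.j x :=
  Classical.choose_spec (transfer_ex W₁ W₂ hrange x)

variable (W₁ W₂ : WDS M f) (hrange : Set.range W₁.j = Set.range W₂.j)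

lemma transfer_inj : Function.Injective (transfer W₁ W₂ hrange) := by
  intro x y hxy
  have h1 := transfer_spec W₁ W₂ hrange x
  have h2 := transfer_spec W₁ W₂ hrange y
  rw [hxy, h2] at h1
  exact W₁.j_emb.injective h1.symm

lemma transfer_cont : Continuous (transfer W₁ W₂ hrange) := by
  rw [W₂.j_emb.continuous_iff]
  have : W₂.j ∘ transfer W₁ W₂ hrange = W₁.j := funext (transfer_spec W₁ W₂ hrange)
  rw [this]
  exact W₁.j_emb.continuous

lemma transfer_left_inv (x : W₁.K) :
    transfer W₂ W₁ hrange.symm (transfer W₁ W₂ hrange x) = x := by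
  apply W₁.j_emb.injective
  rw [transfer_spec, transfer_spec]

lemma transfer_conj (x : W₁.K) :
    transfer W₁ W₂ hrange (hK W₁.toDenjoySystem x) = hK W₂.toDenjoySystem (transfer W₁ W₂ hrange x) := by
  apply W₂.j_emb.injective
  rw [transfer_spec]
  have e1 : W₁.j (hK W₁.toDenjoySystem x) = f (W₁.j x) := W₁.equivar x _ rfl
  have e2 : W₂.j (hK W₂.toDenjoySystem (transfer W₁ W₂ hrange x)) = f (W₂.j (transfer W₁ W₂ hrange x)) :=
    W₂.equivar _ _ rfl
  rw [e1, e2, transfer_spec]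

lemma transfer_conj_iter (n : ℕ) (x : W₁.K) :
    transfer W₁ W₂ hrange ((hK W₁.toDenjoySystem)^[n] x)
      = (hK W₂.toDenjoySystem)^[n] (transfer W₁ W₂ hrange x) := by
  induction n with
  | zero => rfl
  | succ m ih =>
    rw [Function.iterate_succ_apply', Function.iterate_succ_apply', ← ih, transfer_conj]

/-- `ψ x = pbar₂ (φ x)`. -/
def psi (x : W₁.K) : 𝕋 := pbar W₂.toDenjoySystem ((transfer W₁ W₂ hrange x : 𝕋))

lemma psi_cont : Continuous (psi W₁ W₂ hrange) :=
  (pbar_cont W₂.toDenjoySystem).comp (continuous_subtype_val.comp (transfer_cont W₁ W₂ hrange))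

lemma psi_iter_diff (a b : W₁.K) (n : ℕ) :
    psi W₁ W₂ hrange ((hK W₁.toDenjoySystem)^[n] a) - psi W₁ W₂ hrange ((hK W₁.toDenjoySystem)^[n] b)
      = psi W₁ W₂ hrange a - psi W₁ W₂ hrange b := by
  induction n with
  | zero => rfl
  | succ m ih =>
    rw [Function.iterate_succ_apply', Function.iterate_succ_apply']
    have key : ∀ y : W₁.K, psi W₁ W₂ hrange (hK W₁.toDenjoySystem y)
        = psi W₁ W₂ hrange y + ((W₂.rot : ℝ) : 𝕋) := by
      intro y
      unfold psi
      rw [transfer_conj, hK_coe, pbar_equivar]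
    rw [key, key]
    rw [show ∀ u v w : 𝕋, u + w - (v + w) = u - v from fun u v w => by abel]
    exact ih

/-- measure of an arc -/
lemma arc_volume {s t : ℝ} (hst : s < t) (h1 : t ≤ s + 1) :
    MeasureTheory.volume (((↑) : ℝ → 𝕋) '' Ioo s t) = ENNReal.ofReal (t - s) := by
  have hmp := AddCircle.measurePreserving_mk 1 s
  have hopen : IsOpen (((↑) : ℝ → 𝕋) '' Ioo s t) := topen _ isOpen_Ioo
  have hpre : (((↑) : ℝ → 𝕋) ⁻¹' (((↑) : ℝ → 𝕋) '' Ioo s t)) ∩ Ioc s (s + 1) = Ioo s t := by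
    ext c
    constructor
    · rintro ⟨⟨w, hw, hwc⟩, hc⟩
      obtain ⟨m, hm⟩ := tcoe_eq_iff.1 hwc
      have : (m:ℝ) = c - w := by linarith [hm]
      have hm1 : (m:ℝ) < 1 := by rw [this]; rcases hw with ⟨hw1, hw2⟩; rcases hc with ⟨hc1, hc2⟩; linarith
      have hm2 : (-1:ℝ) < m := by rw [this]; rcases hw with ⟨hw1, hw2⟩; rcases hc with ⟨hc1, hc2⟩; linarith
      have i1 : m < 1 := by exact_mod_cast hm1
      have i2 : -1 < m := by exact_mod_cast hm2
      have : m = 0 := by omega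
      subst this
      simp at hm
      rw [hm]; exact hw
    · intro hc
      exact ⟨⟨c, hc, rfl⟩, ⟨hc.1, by linarith [hc.2]⟩⟩
  have := hmp.measure_preimage (s := ((↑) : ℝ → 𝕋) '' Ioo s t) hopen.measurableSet.nullMeasurableSet
  rw [MeasureTheory.Measure.restrict_apply' measurableSet_Ioc, hpre] at this
  rw [← this, Real.volume_Ioo]

/-- The asymptotic-pairs argument: the conjugacy respects fibers of the semiconjugacies. -/
lemma psi_fiber_aux (a b : W₁.K) (x y : ℝ)
    (hxa : ((x:ℝ) : 𝕋) = (a : 𝕋)) (hyb : ((y:ℝ) : 𝕋) = (b : 𝕋))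
    (hxy : x < y) (hy1 : y < x + 1)
    (hpi : piF W₁.toDenjoySystem x = piF W₁.toDenjoySystem y) :
    psi W₁ W₂ hrange a = psi W₁ W₂ hrange b := by
  set Lx : ℕ → ℝ := fun n => W₁.toDenjoySystem.lift^[n] x
  set Ly : ℕ → ℝ := fun n => W₁.toDenjoySystem.lift^[n] y
  have hmono : ∀ n, Lx n < Ly n := fun n => (W₁.toDenjoySystem.lift_mono.iterate n) hxy
  have hadd : ∀ n (u : ℝ), W₁.toDenjoySystem.lift^[n] (u + 1) = W₁.toDenjoySystem.lift^[n] u + 1 := by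
    intro n
    induction n with
    | zero => intro u; simp
    | succ m ih =>
      intro u
      rw [Function.iterate_succ_apply, Function.iterate_succ_apply, W₁.toDenjoySystem.lift_add]
      exact ih _
  have hlen : ∀ n, Ly n < Lx n + 1 := by
    intro n
    have := (W₁.toDenjoySystem.lift_mono.iterate n) hy1
    rwa [hadd] at this
  have hπiter : ∀ n, piF W₁.toDenjoySystem (Lx n) = n * W₁.toDenjoySystem.rot + piF W₁.toDenjoySystem x ∧ piF W₁.toDenjoySystem (Ly n) = n * W₁.toDenjoySystem.rot + piF W₁.toDenjoySystem y := by
    intro n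
    induction n with
    | zero => simp [Lx, Ly]
    | succ m ih =>
      constructor
      · show piF W₁.toDenjoySystem (W₁.toDenjoySystem.lift^[m+1] x) = _
        rw [Function.iterate_succ_apply', show (piF W₁.toDenjoySystem) (W₁.toDenjoySystem.lift (W₁.toDenjoySystem.lift^[m] x)) = W₁.toDenjoySystem.rot + piF W₁.toDenjoySystem (W₁.toDenjoySystem.lift^[m] x) from piF_semiconj W₁.toDenjoySystem _, ih.1]
        push_cast; ring
      · show piF W₁.toDenjoySystem (W₁.toDenjoySystem.lift^[m+1] y) = _
        rw [Function.iterate_succ_apply', show (piF W₁.toDenjoySystem) (W₁.toDenjoySystem.lift (W₁.toDenjoySystem.lift^[m] y)) = W₁.toDenjoySystem.rot + piF W₁.toDenjoySystem (W₁.toDenjoySystem.lift^[m] y) from piF_semiconj W₁.toDenjoySystem _, ih.2]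
        push_cast; ring
  have hπconst : ∀ n, ∀ t ∈ Icc (Lx n) (Ly n), piF W₁.toDenjoySystem t = n * W₁.toDenjoySystem.rot + piF W₁.toDenjoySystem x := by
    intro n t ht
    have h1 : piF W₁.toDenjoySystem (Lx n) ≤ piF W₁.toDenjoySystem t := (piF W₁.toDenjoySystem).monotone ht.1
    have h2 : piF W₁.toDenjoySystem t ≤ piF W₁.toDenjoySystem (Ly n) := (piF W₁.toDenjoySystem).monotone ht.2
    rw [(hπiter n).1] at h1
    rw [(hπiter n).2, ← hpi] at h2
    linarith
  -- arcs are pairwise disjoint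
  have hdisj : ∀ m n : ℕ, m ≠ n →
      Disjoint (((↑) : ℝ → 𝕋) '' Ioo (Lx m) (Ly m)) (((↑) : ℝ → 𝕋) '' Ioo (Lx n) (Ly n)) := by
    intro m n hmn
    rw [Set.disjoint_left]
    rintro _ ⟨s, hs, rfl⟩ ⟨t, ht, hts⟩
    obtain ⟨k, hk⟩ := tcoe_eq_iff.1 hts.symm
    have hπs : piF W₁.toDenjoySystem s = m * W₁.toDenjoySystem.rot + piF W₁.toDenjoySystem x := hπconst m s ⟨hs.1.le, hs.2.le⟩
    have hπt : piF W₁.toDenjoySystem t = n * W₁.toDenjoySystem.rot + piF W₁.toDenjoySystem x := hπconst n t ⟨ht.1.le, ht.2.le⟩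
    have : piF W₁.toDenjoySystem t = piF W₁.toDenjoySystem s + k := by rw [hk, (piF W₁.toDenjoySystem).map_add_int]
    have hkey : (m:ℝ) * W₁.toDenjoySystem.rot + k = n * W₁.toDenjoySystem.rot := by rw [hπs, hπt] at this; linarith
    have : ((n:ℤ) - (m:ℤ) : ℝ) * W₁.toDenjoySystem.rot = k := by push_cast; push_cast at hkey; linarith
    have hnm : (n:ℤ) - (m:ℤ) ≠ 0 := by
      intro hc
      have : (m:ℤ) = n := by omega
      exact hmn (by exact_mod_cast this)
    apply W₁.toDenjoySystem.rot_irr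
    refine ⟨(k : ℚ) / ((n:ℤ) - (m:ℤ) : ℚ), ?_⟩
    have hne : (((n:ℤ) - (m:ℤ) : ℤ) : ℝ) ≠ 0 := Int.cast_ne_zero.2 hnm
    push_cast
    push_cast at hne
    rw [div_eq_iff hne]
    push_cast at this
    linarith
  -- lengths tend to zero
  set len : ℕ → ℝ := fun n => Ly n - Lx n
  have hlenpos : ∀ n, 0 < len n := fun n => by have := hmono n; simp [len]; linarith
  have hlen1 : ∀ n, len n < 1 := fun n => by have := hlen n; simp [len]; linarith
  have hfin : ∀ ε : ℝ, 0 < ε → {n : ℕ | ε ≤ len n}.Finite := by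
    intro ε hε
    by_contra hinf
    have hinf' : {n : ℕ | ε ≤ len n}.Infinite := hinf
    obtain ⟨N, hN⟩ := exists_nat_gt (1 / ε)
    obtain ⟨S, hS, hcard⟩ := hinf'.exists_subset_card_eq (N + 1)
    have hsum : ∑ n ∈ S, len n ≤ 1 := by
      have hmeas : MeasureTheory.volume (⋃ n ∈ S, ((↑) : ℝ → 𝕋) '' Ioo (Lx n) (Ly n))
          = ∑ n ∈ S, MeasureTheory.volume (((↑) : ℝ → 𝕋) '' Ioo (Lx n) (Ly n)) := by
        apply MeasureTheory.measure_biUnion_finset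
        · intro m hm n hn hmn
          exact hdisj m n hmn
        · intro n _
          exact (topen _ isOpen_Ioo).measurableSet
      have hle : MeasureTheory.volume (⋃ n ∈ S, ((↑) : ℝ → 𝕋) '' Ioo (Lx n) (Ly n)) ≤ 1 := by
        have h0 := MeasureTheory.measure_mono (μ := MeasureTheory.volume)
          (Set.subset_univ (⋃ n ∈ S, ((↑) : ℝ → 𝕋) '' Ioo (Lx n) (Ly n)))
        have huniv : MeasureTheory.volume (univ : Set 𝕋) = 1 := by
          rw [AddCircle.measure_univ 1, ENNReal.ofReal_one]
        exact le_trans h0 (le_of_eq huniv)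
      have harc : ∀ n ∈ S, MeasureTheory.volume (((↑) : ℝ → 𝕋) '' Ioo (Lx n) (Ly n))
          = ENNReal.ofReal (len n) := by
        intro n _
        exact arc_volume (hmono n) (by linarith [hlen n])
      rw [Finset.sum_congr rfl harc] at hmeas
      rw [← ENNReal.ofReal_sum_of_nonneg (fun n _ => (hlenpos n).le)] at hmeas
      rw [hmeas] at hle
      rw [show (1 : ENNReal) = ENNReal.ofReal 1 from ENNReal.ofReal_one.symm] at hle
      exact (ENNReal.ofReal_le_ofReal_iff (by norm_num)).1 hle
    have hgt : (N + 1 : ℝ) * ε ≤ ∑ n ∈ S, len n := by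
      have := Finset.card_nsmul_le_sum S len ε (fun n hn => hS hn)
      rw [hcard] at this
      simpa [nsmul_eq_mul] using this
    have : (N + 1 : ℝ) * ε > 1 := by
      have h1 : (1:ℝ)/ε < N := hN
      have h2 : (1:ℝ) < N * ε := by
        rw [div_lt_iff₀ hε] at h1; linarith
      nlinarith [hε]
    linarith
  have hlen0 : Tendsto len atTop (𝓝 0) := by
    rw [Metric.tendsto_atTop]
    intro ε hε
    have := Set.Finite.eventually_cofinite_notMem (hfin ε hε)
    rw [Nat.cofinite_eq_atTop] at this
    rw [eventually_atTop] at this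
    obtain ⟨N, hN⟩ := this
    exact ⟨N, fun n hn => by
      have := hN n hn
      simp only [Set.mem_setOf_eq, not_le] at this
      rw [Real.dist_eq, sub_zero, abs_of_pos (hlenpos n)]
      exact this⟩
  -- sequences in K₁
  set an : ℕ → W₁.K := fun n => (hK W₁.toDenjoySystem)^[n] a
  set bn : ℕ → W₁.K := fun n => (hK W₁.toDenjoySystem)^[n] b
  have han : ∀ n, ((an n : W₁.K) : 𝕋) = ((Lx n : ℝ) : 𝕋) := fun n => hK_iter_coe W₁.toDenjoySystem n x a hxa.symm
  have hbn : ∀ n, ((bn n : W₁.K) : 𝕋) = ((Ly n : ℝ) : 𝕋) := fun n => hK_iter_coe W₁.toDenjoySystem n y b hyb.symm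
  set δ := psi W₁ W₂ hrange a - psi W₁ W₂ hrange b with hδ
  have hδn : ∀ n, psi W₁ W₂ hrange (an n) - psi W₁ W₂ hrange (bn n) = δ := fun n =>
    psi_iter_diff W₁ W₂ hrange a b n
  -- cluster point argument
  haveI : CompactSpace W₁.K := isCompact_iff_compactSpace.1 W₁.K_cpt
  set q : ℕ → W₁.K × W₁.K := fun n => (an n, bn n)
  haveI : (Filter.map q atTop).NeBot := Filter.map_neBot
  obtain ⟨w, hw⟩ := exists_clusterPt_of_compactSpace (Filter.map q atTop)
  set T : W₁.K × W₁.K → 𝕋 × 𝕋 := fun r =>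
    (psi W₁ W₂ hrange r.1 - psi W₁ W₂ hrange r.2, ((r.2 : 𝕋) - (r.1 : 𝕋)))
  have hTcont : Continuous T := by
    apply Continuous.prodMk
    · exact ((psi_cont W₁ W₂ hrange).comp continuous_fst).sub ((psi_cont W₁ W₂ hrange).comp continuous_snd)
    · exact (continuous_subtype_val.comp continuous_snd).sub (continuous_subtype_val.comp continuous_fst)
  have hTq : Tendsto (T ∘ q) atTop (𝓝 (δ, 0)) := by
    have h1 : ∀ n, (T ∘ q) n = (δ, ((len n : ℝ) : 𝕋)) := by
      intro n
      have : ((bn n : 𝕋) - (an n : 𝕋)) = ((len n : ℝ) : 𝕋) := by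
        rw [han, hbn]
        rw [show ((len n : ℝ) : 𝕋) = ((Ly n - Lx n : ℝ) : 𝕋) from rfl]
        rw [show ((Ly n - Lx n : ℝ)) = Ly n + (- Lx n) by ring, tcoe_add, tcoe_neg]
        abel
      simp only [T, q, Function.comp_apply, hδn n, this]
    rw [funext h1]
    apply Tendsto.prodMk_nhds tendsto_const_nhds
    have : Tendsto (fun n => ((len n : ℝ) : 𝕋)) atTop (𝓝 (((0:ℝ) : 𝕋))) :=
      (tcont.tendsto 0).comp hlen0
    simpa using this
  have hclT : ClusterPt (T w) (Filter.map (T ∘ q) atTop) := by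
    have := hw.map (hTcont.continuousAt) (Filter.tendsto_map (f := T))
    rwa [Filter.map_map] at this
  have hle : Filter.map (T ∘ q) atTop ≤ 𝓝 (δ, (0:𝕋)) := hTq
  have : T w = (δ, 0) := by
    apply eq_of_nhds_neBot
    exact hclT.mono hle
  have hcomp : psi W₁ W₂ hrange w.1 - psi W₁ W₂ hrange w.2 = δ ∧ ((w.2 : 𝕋) - (w.1 : 𝕋)) = 0 := by
    constructor
    · exact congrArg Prod.fst this
    · exact congrArg Prod.snd this
  have hw12 : w.1 = w.2 := by
    apply Subtype.ext
    have := hcomp.2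
    rw [sub_eq_zero] at this
    exact this.symm
  have hδ0 : δ = 0 := by rw [← hcomp.1, hw12, sub_self]
  exact sub_eq_zero.1 (hδ.symm.trans hδ0)

end Pair

end WDSAux

namespace WDSAux

section Pair2

variable {M : Type*} [MetricSpace M] {f : M → M}
variable (W₁ W₂ : WDS M f) (hrange : Set.range W₁.j = Set.range W₂.j)

lemma psi_fiber (a b : W₁.K)
    (hp : pbar W₁.toDenjoySystem (a : 𝕋) = pbar W₁.toDenjoySystem (b : 𝕋)) :
    psi W₁ W₂ hrange a = psi W₁ W₂ hrange b := by
  by_cases hab : a = b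
  · rw [hab]
  · have hne : (a : 𝕋) ≠ (b : 𝕋) := fun h => hab (Subtype.ext h)
    obtain ⟨x, y, hxy, hy1, hpi, hgap, hor⟩ :=
      fiber_gap W₁.toDenjoySystem a.2 b.2 hne hp
    rcases hor with ⟨hxa, hyb⟩ | ⟨hxb, hya⟩
    · exact psi_fiber_aux W₁ W₂ hrange a b x y hxa hyb hxy hy1 hpi
    · exact (psi_fiber_aux W₁ W₂ hrange b a x y hxb hya hxy hy1 hpi).symm

/-- The induced circle map. -/
def gmap (t : 𝕋) : 𝕋 :=
  psi W₁ W₂ hrange ⟨Classical.choose (pbar_surjK W₁.toDenjoySystem t),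
    (Classical.choose_spec (pbar_surjK W₁.toDenjoySystem t)).1⟩

lemma gmap_spec (x : W₁.K) :
    gmap W₁ W₂ hrange (pbar W₁.toDenjoySystem (x : 𝕋)) = psi W₁ W₂ hrange x := by
  apply psi_fiber
  exact (Classical.choose_spec (pbar_surjK W₁.toDenjoySystem (pbar W₁.toDenjoySystem (x : 𝕋)))).2

lemma gmap_cont : Continuous (gmap W₁ W₂ hrange) := by
  haveI : CompactSpace W₁.K := isCompact_iff_compactSpace.1 W₁.K_cpt
  have hQc : Continuous (fun x : W₁.K => pbar W₁.toDenjoySystem (x : 𝕋)) :=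
    (pbar_cont W₁.toDenjoySystem).comp continuous_subtype_val
  have hQs : Function.Surjective (fun x : W₁.K => pbar W₁.toDenjoySystem (x : 𝕋)) := by
    intro t
    obtain ⟨k, hk, hkt⟩ := pbar_surjK W₁.toDenjoySystem t
    exact ⟨⟨k, hk⟩, hkt⟩
  have hq : IsQuotientMap (fun x : W₁.K => pbar W₁.toDenjoySystem (x : 𝕋)) :=
    (hQc.isClosedMap).isQuotientMap hQc hQs
  rw [hq.continuous_iff]
  exact (psi_cont W₁ W₂ hrange).congr (fun x => (gmap_spec W₁ W₂ hrange x).symm)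

lemma gmap_left_inv (t : 𝕋) :
    gmap W₂ W₁ hrange.symm (gmap W₁ W₂ hrange t) = t := by
  obtain ⟨k, hk, hkt⟩ := pbar_surjK W₁.toDenjoySystem t
  set x : W₁.K := ⟨k, hk⟩
  have h1 : gmap W₁ W₂ hrange t = psi W₁ W₂ hrange x := by
    rw [← hkt]; exact gmap_spec W₁ W₂ hrange x
  have h2 : psi W₁ W₂ hrange x = pbar W₂.toDenjoySystem ((transfer W₁ W₂ hrange x : 𝕋)) := rfl
  rw [h1, h2, gmap_spec W₂ W₁ hrange.symm (transfer W₁ W₂ hrange x)]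
  show pbar W₁.toDenjoySystem ((transfer W₂ W₁ hrange.symm (transfer W₁ W₂ hrange x) : 𝕋)) = t
  rw [transfer_left_inv, hkt]

lemma gmap_inj : Function.Injective (gmap W₁ W₂ hrange) :=
  Function.LeftInverse.injective (gmap_left_inv W₁ W₂ hrange)

end Pair2

end WDSAux

namespace WDSAux

lemma sbtw_of_lifts {a b c : 𝕋} {x y z : ℝ} (hx : ((x:ℝ):𝕋) = a) (hy : ((y:ℝ):𝕋) = b)
    (hz : ((z:ℝ):𝕋) = c) (h1 : x < y) (h2 : y < z) (h3 : z < x + 1) : SBtw a b c :=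
  ⟨y - x, z - x, by linarith, by linarith, by linarith,
    by rw [← hx, ← hy, ← tcoe_add]; norm_num,
    by rw [← hx, ← hz, ← tcoe_add]; norm_num⟩

lemma coe_add_one (x : ℝ) : ((x + 1 : ℝ) : 𝕋) = ((x : ℝ) : 𝕋) := by
  rw [tcoe_add, tcoe_one, add_zero]

lemma sbtw_points_of_p {p₂ : 𝕋 → 𝕋}
    (hP1 : ∀ a b c : 𝕋, CircBtw a b c → CircBtw (p₂ a) (p₂ b) (p₂ c))
    {P Q R : 𝕋} (hPQ : P ≠ Q) (hQR : Q ≠ R) (hPR : P ≠ R)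
    (hS : SBtw (p₂ P) (p₂ Q) (p₂ R)) : SBtw P Q R := by
  rcases sbtw_total hPQ hQR hPR with h | h
  · exact h
  · exfalso
    have hb : CircBtw (p₂ R) (p₂ Q) (p₂ P) := hP1 _ _ _ h.btw
    exact sbtw_asymm hS (sbtw_of_btw_ne hb hS.ne₂₃.symm hS.ne₁₂.symm hS.ne₁₃.symm)

section Core

variable {M : Type*} [MetricSpace M] {f : M → M}
variable (W₁ : WDS M f) (K₂ : Set 𝕋) (p₂ : 𝕋 → 𝕋) (φ : W₁.K → 𝕋) (g : 𝕋 → 𝕋)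

set_option maxHeartbeats 1000000 in
lemma core_aux
    (hP1 : ∀ a b c : 𝕋, CircBtw a b c → CircBtw (p₂ a) (p₂ b) (p₂ c))
    (hP2 : ∀ A B : 𝕋, A ∈ K₂ → B ∈ K₂ → A ≠ B → p₂ A = p₂ B →
      ∃ u v : ℝ, u < v ∧ v < u + 1 ∧ (∀ t ∈ Ioo u v, ((t:ℝ):𝕋) ∉ K₂) ∧
        ((((u:ℝ):𝕋) = A ∧ ((v:ℝ):𝕋) = B) ∨ (((u:ℝ):𝕋) = B ∧ ((v:ℝ):𝕋) = A)))
    (hφK : ∀ x, φ x ∈ K₂) (hφinj : Function.Injective φ)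
    (hφcont : Continuous φ)
    (hglue : ∀ x : W₁.K, g (pbar W₁.toDenjoySystem (x : 𝕋)) = p₂ (φ x))
    (hgplus : ∀ a b c : 𝕋, SBtw a b c → SBtw (g a) (g b) (g c))
    (a b c : W₁.K)
    (hab : (a:𝕋) ≠ (b:𝕋)) (hbc : (b:𝕋) ≠ (c:𝕋)) (hac : (a:𝕋) ≠ (c:𝕋))
    (hbtw : CircBtw (a:𝕋) (b:𝕋) (c:𝕋))
    (hfib : pbar W₁.toDenjoySystem (a:𝕋) = pbar W₁.toDenjoySystem (b:𝕋))
    (hαγ : pbar W₁.toDenjoySystem (a:𝕋) ≠ pbar W₁.toDenjoySystem (c:𝕋))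
    (hS : SBtw (φ c) (φ b) (φ a)) : False := by
  have hSabc : SBtw (a:𝕋) (b:𝕋) (c:𝕋) := sbtw_of_btw_ne hbtw hab hbc hac
  have haneb : a ≠ b := fun h => hab (by rw [h])
  have hanec : a ≠ c := fun h => hac (by rw [h])
  have hbnec : b ≠ c := fun h => hbc (by rw [h])
  have hφab : φ a ≠ φ b := fun h => haneb (hφinj h)
  have hφbc : φ b ≠ φ c := fun h => hbnec (hφinj h)
  have hφac : φ a ≠ φ c := fun h => hanec (hφinj h)
  -- the gap between a and b on side 1
  obtain ⟨x, y, hxy, hy1, hpi, hgap, hor⟩ :=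
    fiber_gap W₁.toDenjoySystem a.2 b.2 hab hfib
  obtain ⟨hxa, hyb⟩ : ((x:ℝ):𝕋) = (a:𝕋) ∧ ((y:ℝ):𝕋) = (b:𝕋) := by
    rcases hor with h | ⟨hxb, hya⟩
    · exact h
    · exfalso
      obtain ⟨z, hz, hzc⟩ := exists_lift_Ico (c:𝕋) x
      have hzx : x < z := lt_of_le_of_ne hz.1 (fun h => hbc (by rw [← hxb, h, hzc]))
      have hzy : z ∉ Ioo x y := fun h => hgap z h (by rw [hzc]; exact c.2)
      have hzy' : y < z := by
        rcases lt_or_ge z y with h | h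
        · exact absurd ⟨hzx, h⟩ hzy
        · exact lt_of_le_of_ne h (fun h' => hac (by rw [← hya, h', hzc]))
      have : SBtw (a:𝕋) (c:𝕋) (b:𝕋) :=
        sbtw_of_lifts hya hzc ((coe_add_one x).trans hxb) hzy' hz.2 (by linarith)
      exact sbtw_asymm hSabc this.cyclic
  -- lift of c between b and a
  obtain ⟨z, hyz, hz1, hzc⟩ : ∃ z : ℝ, y < z ∧ z < x + 1 ∧ ((z:ℝ):𝕋) = (c:𝕋) := by
    obtain ⟨z, hz, hzc⟩ := exists_lift_Ico (c:𝕋) x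
    have hzx : x < z := lt_of_le_of_ne hz.1 (fun h => hac (by rw [← hxa, h, hzc]))
    have hzy : z ∉ Ioo x y := fun h => hgap z h (by rw [hzc]; exact c.2)
    have hzy' : y < z := by
      rcases lt_or_ge z y with h | h
      · exact absurd ⟨hzx, h⟩ hzy
      · exact lt_of_le_of_ne h (fun h' => hbc (by rw [← hyb, h', hzc]))
    exact ⟨z, hzy', hz.2, hzc⟩
  -- the gap between φ b and φ a on side 2
  have hpAB : p₂ (φ a) = p₂ (φ b) := by rw [← hglue a, ← hglue b, hfib]
  obtain ⟨u, v, huv, hv1, hgap2, hor2⟩ := hP2 (φ a) (φ b) (hφK a) (hφK b) hφab hpAB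
  obtain ⟨huB, hvA⟩ : ((u:ℝ):𝕋) = φ b ∧ ((v:ℝ):𝕋) = φ a := by
    rcases hor2 with ⟨huA, hvB⟩ | h
    · exfalso
      obtain ⟨w, hw, hwc⟩ := exists_lift_Ico (φ c) u
      have hwu : u < w := lt_of_le_of_ne hw.1 (fun h => hφac (by rw [← huA, h, hwc]))
      have hwv : w ∉ Ioo u v := fun h => hgap2 w h (by rw [hwc]; exact hφK c)
      have hwv' : v < w := by
        rcases lt_or_ge w v with h | h
        · exact absurd ⟨hwu, h⟩ hwv
        · exact lt_of_le_of_ne h (fun h' => hφbc (by rw [← hvB, h', hwc]))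
      exact sbtw_asymm (sbtw_of_lifts huA hvB hwc huv hwv' hw.2) hS
    · exact h
  -- lift of φ c
  obtain ⟨w, hvw, hw1, hwc⟩ : ∃ w : ℝ, v < w ∧ w < u + 1 ∧ ((w:ℝ):𝕋) = φ c := by
    obtain ⟨w, hw, hwc⟩ := exists_lift_Ico (φ c) u
    have hwu : u < w := lt_of_le_of_ne hw.1 (fun h => hφbc (by rw [← huB, h, hwc]))
    have hwv : w ∉ Ioo u v := fun h => hgap2 w h (by rw [hwc]; exact hφK c)
    have hwv' : v < w := by
      rcases lt_or_ge w v with h | h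
      · exact absurd ⟨hwu, h⟩ hwv
      · exact lt_of_le_of_ne h (fun h' => hφac (by rw [← hvA, h', hwc]))
    exact ⟨w, hwv', hw.2, hwc⟩
  -- small constants
  set η : ℝ := min (x + 1 - z) (y - x) / 2 with hηdef
  have hη : 0 < η := by
    apply div_pos _ two_pos
    apply lt_min <;> linarith
  have hη1 : η ≤ (x + 1 - z) / 2 := by
    have h := min_le_left (x + 1 - z) (y - x)
    rw [hηdef]; linarith
  have hη2 : η ≤ (y - x) / 2 := by
    have h := min_le_right (x + 1 - z) (y - x)
    rw [hηdef]; linarith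
  set ε : ℝ := (w - v) / 2 with hεdef
  have hε : 0 < ε := by apply div_pos _ two_pos; linarith
  -- the bad set
  set α := pbar W₁.toDenjoySystem (a:𝕋) with hαdef
  set γ := pbar W₁.toDenjoySystem (c:𝕋) with hγdef
  set bad : Set 𝕋 := ((W₁.K ∩ pbar W₁.toDenjoySystem ⁻¹' {α}) \ {(a:𝕋)}) ∪
      ((W₁.K ∩ pbar W₁.toDenjoySystem ⁻¹' {γ}) \ {(c:𝕋)}) with hbaddef
  have hsub1 : ((W₁.K ∩ pbar W₁.toDenjoySystem ⁻¹' {α}) \ {(a:𝕋)}).Subsingleton := by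
    intro d hd d' hd'
    by_contra hdd'
    refine fiber_two W₁.toDenjoySystem a.2 hd.1.1 hd'.1.1 ?_ hdd' ?_ ?_ ?_
    · exact fun h => hd.2 (by rw [← h]; rfl)
    · exact fun h => hd'.2 (by rw [← h]; rfl)
    · exact hd.1.2.symm
    · exact hd'.1.2.symm
  have hsub2 : ((W₁.K ∩ pbar W₁.toDenjoySystem ⁻¹' {γ}) \ {(c:𝕋)}).Subsingleton := by
    intro d hd d' hd'
    by_contra hdd'
    refine fiber_two W₁.toDenjoySystem c.2 hd.1.1 hd'.1.1 ?_ hdd' ?_ ?_ ?_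
    · exact fun h => hd.2 (by rw [← h]; rfl)
    · exact fun h => hd'.2 (by rw [← h]; rfl)
    · exact hd.1.2.symm
    · exact hd'.1.2.symm
  have hbadfin : bad.Finite := (hsub1.finite).union (hsub2.finite)
  have hanb : (a:𝕋) ∉ bad := by
    rintro (h | h)
    · exact h.2 rfl
    · exact hαγ h.1.2
  -- the neighbourhoods
  set N : Set 𝕋 := ((↑) : ℝ → 𝕋) '' Ioo (x + 1 - η) (x + 1 + η) with hNdef
  set U : Set 𝕋 := ((↑) : ℝ → 𝕋) '' Ioo u (v + ε) with hUdef
  have hNopen : IsOpen N := topen _ isOpen_Ioo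
  have hUopen : IsOpen U := topen _ isOpen_Ioo
  have haN : (a:𝕋) ∈ N := ⟨x + 1, ⟨by linarith, by linarith⟩, (coe_add_one x).trans hxa⟩
  have haU : φ a ∈ U := ⟨v, ⟨huv, by linarith⟩, hvA⟩
  set V : Set W₁.K := (Subtype.val ⁻¹' (N \ bad)) ∩ (φ ⁻¹' U) with hVdef
  have hVopen : IsOpen V :=
    ((hNopen.sdiff hbadfin.isClosed).preimage continuous_subtype_val).inter
      (hUopen.preimage hφcont)
  have haV : a ∈ V := ⟨⟨haN, hanb⟩, haU⟩
  obtain ⟨O, hOopen, hOV⟩ := isOpen_induced_iff.1 hVopen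
  have haO : (a:𝕋) ∈ O := by
    have : a ∈ Subtype.val ⁻¹' O := by rw [show Subtype.val ⁻¹' O = V from hOV]; exact haV
    exact this
  -- accumulation point
  have hacc : AccPt (a:𝕋) (Filter.principal W₁.K) := W₁.K_perf.acc (a:𝕋) a.2
  obtain ⟨d', hd'O, hd'ne⟩ : ∃ d', d' ∈ O ∩ W₁.K ∧ d' ≠ (a:𝕋) := by
    obtain ⟨d', h1, h2⟩ := accPt_iff_nhds.1 hacc O (hOopen.mem_nhds haO)
    exact ⟨d', h1, h2⟩
  set d : W₁.K := ⟨d', hd'O.2⟩ with hddef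
  have hdV : d ∈ V := by
    rw [← hOV]
    exact hd'O.1
  have hdN : d' ∈ N := hdV.1.1
  have hdnb : d' ∉ bad := hdV.1.2
  have hdU : φ d ∈ U := hdV.2
  -- the lift of d'
  obtain ⟨t, htIoo, htd⟩ := hdN
  have htne : t ≠ x + 1 := fun h => hd'ne (by rw [← htd, h, coe_add_one, hxa])
  have ht1 : t < x + 1 := by
    rcases lt_or_ge t (x+1) with h | h
    · exact h
    · exfalso
      have ht' : t - 1 ∈ Ioo x y := by
        constructor
        · have := lt_of_le_of_ne h (Ne.symm htne)
          linarith
        · have h2 := htIoo.2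
          linarith [hη2, hxy]
      refine hgap (t-1) ht' ?_
      have h3 := coe_add_one (t - 1)
      rw [show t - 1 + 1 = t by ring] at h3
      rw [h3.symm, htd]
      exact hd'O.2
  have htz : z < t := by
    have h4 := htIoo.1
    linarith [hη1, hz1]
  -- pbar values of d'
  have hδα : pbar W₁.toDenjoySystem d' ≠ α := by
    intro h
    exact hdnb (Or.inl ⟨⟨hd'O.2, h⟩, hd'ne⟩)
  have hdnec : d' ≠ (c:𝕋) := by
    intro h
    have : ((t:ℝ):𝕋) = ((z:ℝ):𝕋) := by rw [htd, hzc, h]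
    have := lift_unique this (by rw [abs_of_neg (by linarith : z - t < 0)]; linarith)
    linarith [this]
  have hδγ : pbar W₁.toDenjoySystem d' ≠ γ := by
    intro h
    exact hdnb (Or.inr ⟨⟨hd'O.2, h⟩, hdnec⟩)
  -- SBtw c d a
  have hScda : SBtw (c:𝕋) d' (a:𝕋) :=
    sbtw_of_lifts hzc htd ((coe_add_one x).trans hxa) htz ht1 (by linarith)
  have hdcoe : (d : 𝕋) = d' := rfl
  have hB1 : CircBtw γ (pbar W₁.toDenjoySystem d') α := pbar_btw W₁.toDenjoySystem hScda.btw
  have hSv : SBtw γ (pbar W₁.toDenjoySystem d') α :=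
    sbtw_of_btw_ne hB1 (Ne.symm hδγ) hδα (Ne.symm hαγ)
  have hSg := hgplus _ _ _ hSv
  rw [hαdef, hγdef] at hSg
  rw [← hdcoe] at hSg
  rw [hglue a, hglue c, hglue d] at hSg
  -- hSg : SBtw (p₂ (φ c)) (p₂ (φ d)) (p₂ (φ a))
  have hdnea' : d ≠ a := fun h => hd'ne (by rw [← hdcoe, h])
  have hdnec' : d ≠ c := fun h => hdnec (by rw [← hdcoe, h])
  have hφcd : φ c ≠ φ d := fun h => hdnec' (hφinj h.symm)
  have hφda : φ d ≠ φ a := fun h => hdnea' (hφinj h)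
  have hSP : SBtw (φ c) (φ d) (φ a) :=
    sbtw_points_of_p hP1 hφcd hφda (Ne.symm hφac) hSg
  -- position of φ d
  obtain ⟨w', hw'Ioo, hw'd⟩ := hdU
  have hw'v : w' ∉ Ioo u v := fun h => hgap2 w' h (by rw [hw'd]; exact hφK d)
  have hw'v' : v < w' := by
    rcases lt_or_ge w' v with h | h
    · exact absurd ⟨hw'Ioo.1, h⟩ hw'v
    · exact lt_of_le_of_ne h (fun h' => hφda (by rw [← hw'd, ← h', hvA]))
  have hSfin : SBtw (φ a) (φ d) (φ c) := by
    refine sbtw_of_lifts hvA hw'd hwc hw'v' ?_ (by linarith)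
    have h5 := hw'Ioo.2
    rw [hεdef] at h5
    linarith
  exact sbtw_asymm hSfin hSP

end Core

end WDSAux

namespace WDSAux

section Core2

variable {M : Type*} [MetricSpace M] {f : M → M}
variable (W₁ : WDS M f) (K₂ : Set 𝕋) (p₂ : 𝕋 → 𝕋) (φ : W₁.K → 𝕋) (g : 𝕋 → 𝕋)

set_option maxHeartbeats 1000000 in
lemma core_step
    (hP1 : ∀ a b c : 𝕋, CircBtw a b c → CircBtw (p₂ a) (p₂ b) (p₂ c))
    (hP2 : ∀ A B : 𝕋, A ∈ K₂ → B ∈ K₂ → A ≠ B → p₂ A = p₂ B →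
      ∃ u v : ℝ, u < v ∧ v < u + 1 ∧ (∀ t ∈ Ioo u v, ((t:ℝ):𝕋) ∉ K₂) ∧
        ((((u:ℝ):𝕋) = A ∧ ((v:ℝ):𝕋) = B) ∨ (((u:ℝ):𝕋) = B ∧ ((v:ℝ):𝕋) = A)))
    (hφK : ∀ x, φ x ∈ K₂) (hφinj : Function.Injective φ)
    (hφcont : Continuous φ)
    (hglue : ∀ x : W₁.K, g (pbar W₁.toDenjoySystem (x : 𝕋)) = p₂ (φ x))
    (hgplus : ∀ a b c : 𝕋, SBtw a b c → SBtw (g a) (g b) (g c)) :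
    ∀ a b c : W₁.K, CircBtw (a:𝕋) (b:𝕋) (c:𝕋) → CircBtw (φ a) (φ b) (φ c) := by
  intro a b c hbtw
  by_cases hab : (a:𝕋) = (b:𝕋)
  · rw [show φ b = φ a from congrArg φ (Subtype.ext hab).symm]
    exact btw_degen₁ _ _
  by_cases hbc : (b:𝕋) = (c:𝕋)
  · rw [show φ c = φ b from congrArg φ (Subtype.ext hbc).symm]
    exact btw_degen₂ _ _
  by_cases hac : (a:𝕋) = (c:𝕋)
  · rw [show φ c = φ a from congrArg φ (Subtype.ext hac).symm]
    exact btw_degen₃ _ _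
  by_contra hnc
  have hφab : φ a ≠ φ b := fun h => hab (congrArg Subtype.val (hφinj h))
  have hφbc : φ b ≠ φ c := fun h => hbc (congrArg Subtype.val (hφinj h))
  have hφac : φ a ≠ φ c := fun h => hac (congrArg Subtype.val (hφinj h))
  have hCBA : SBtw (φ c) (φ b) (φ a) := by
    rcases sbtw_total hφab hφbc hφac with h | h
    · exact absurd h.btw hnc
    · exact h
  by_cases hαβ : pbar W₁.toDenjoySystem (a:𝕋) = pbar W₁.toDenjoySystem (b:𝕋)
  · by_cases hαγ : pbar W₁.toDenjoySystem (a:𝕋) = pbar W₁.toDenjoySystem (c:𝕋)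
    · exact fiber_two W₁.toDenjoySystem a.2 b.2 c.2 hab hbc hac hαβ hαγ
    · exact core_aux W₁ K₂ p₂ φ g hP1 hP2 hφK hφinj hφcont hglue hgplus a b c
        hab hbc hac hbtw hαβ hαγ hCBA
  · by_cases hβγ : pbar W₁.toDenjoySystem (b:𝕋) = pbar W₁.toDenjoySystem (c:𝕋)
    · exact core_aux W₁ K₂ p₂ φ g hP1 hP2 hφK hφinj hφcont hglue hgplus b c a
        hbc (fun h => hac h.symm) (fun h => hab h.symm) (btw_cyclic hbtw) hβγ
        (fun h => hαβ h.symm) hCBA.cyclic.cyclic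
    · by_cases hαγ : pbar W₁.toDenjoySystem (a:𝕋) = pbar W₁.toDenjoySystem (c:𝕋)
      · exact core_aux W₁ K₂ p₂ φ g hP1 hP2 hφK hφinj hφcont hglue hgplus c a b
          (fun h => hac h.symm) hab (fun h => hbc h.symm) (btw_cyclic (btw_cyclic hbtw)) hαγ.symm
          (fun h => hβγ h.symm) hCBA.cyclic
      · have h1 : SBtw (pbar W₁.toDenjoySystem (a:𝕋)) (pbar W₁.toDenjoySystem (b:𝕋))
            (pbar W₁.toDenjoySystem (c:𝕋)) :=
          sbtw_of_btw_ne (pbar_btw W₁.toDenjoySystem hbtw) hαβ hβγ hαγ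
        have h2 := hgplus _ _ _ h1
        rw [hglue a, hglue b, hglue c] at h2
        have h3 : CircBtw (p₂ (φ c)) (p₂ (φ b)) (p₂ (φ a)) := hP1 _ _ _ hCBA.btw
        exact sbtw_asymm h2 (sbtw_of_btw_ne h3 h2.ne₂₃.symm h2.ne₁₂.symm h2.ne₁₃.symm)

end Core2

section Master

variable {M : Type*} [MetricSpace M] {f : M → M}

lemma graph_incl (W₁ W₂ : WDS M f) (hrange : Set.range W₁.j = Set.range W₂.j) :
    W₁.orderGraph ⊆ W₂.orderGraph ∨ W₁.orderGraph ⊆ W₂.revGraph := by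
  set φ₀ := transfer W₁ W₂ hrange with hφ₀
  set g := gmap W₁ W₂ hrange with hg
  have hginj : Function.Injective g := gmap_inj W₁ W₂ hrange
  have hgcont : Continuous g := gmap_cont W₁ W₂ hrange
  have hφKmem : ∀ x : W₁.K, ((φ₀ x : 𝕋)) ∈ W₂.K := fun x => (φ₀ x).2
  have hφinj : Function.Injective (fun x : W₁.K => ((φ₀ x : 𝕋))) := by
    intro x y h
    exact transfer_inj W₁ W₂ hrange (Subtype.ext h)
  have hφcont : Continuous (fun x : W₁.K => ((φ₀ x : 𝕋))) :=
    continuous_subtype_val.comp (transfer_cont W₁ W₂ hrange)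
  have hglue : ∀ x : W₁.K, g (pbar W₁.toDenjoySystem (x : 𝕋))
      = pbar W₂.toDenjoySystem ((φ₀ x : 𝕋)) := fun x => gmap_spec W₁ W₂ hrange x
  have hP1 : ∀ a b c : 𝕋, CircBtw a b c →
      CircBtw (pbar W₂.toDenjoySystem a) (pbar W₂.toDenjoySystem b) (pbar W₂.toDenjoySystem c) :=
    fun a b c h => pbar_btw W₂.toDenjoySystem h
  have hP2 : ∀ A B : 𝕋, A ∈ W₂.K → B ∈ W₂.K → A ≠ B →
      pbar W₂.toDenjoySystem A = pbar W₂.toDenjoySystem B →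
      ∃ u v : ℝ, u < v ∧ v < u + 1 ∧ (∀ t ∈ Ioo u v, ((t:ℝ):𝕋) ∉ W₂.K) ∧
        ((((u:ℝ):𝕋) = A ∧ ((v:ℝ):𝕋) = B) ∨ (((u:ℝ):𝕋) = B ∧ ((v:ℝ):𝕋) = A)) := by
    intro A B hA hB hAB hp
    obtain ⟨u, v, h1, h2, _, h4, h5⟩ := fiber_gap W₂.toDenjoySystem hA hB hAB hp
    exact ⟨u, v, h1, h2, h4, h5⟩
  rcases dichotomy hgcont hginj with hplus | hminus
  · left
    rintro p ⟨a, b, c, hbtw, rfl⟩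
    have hres := core_step W₁ W₂.K (pbar W₂.toDenjoySystem) (fun x => ((φ₀ x : 𝕋))) g
      hP1 hP2 hφKmem hφinj hφcont hglue hplus a b c hbtw
    exact ⟨φ₀ a, φ₀ b, φ₀ c, hres, by
      rw [transfer_spec W₁ W₂ hrange a, transfer_spec W₁ W₂ hrange b,
        transfer_spec W₁ W₂ hrange c]⟩
  · right
    -- mirrored data
    set K₂' : Set 𝕋 := {t : 𝕋 | -t ∈ W₂.K} with hK₂'
    set p₂' : 𝕋 → 𝕋 := fun t => -(pbar W₂.toDenjoySystem (-t)) with hp₂'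
    set φ' : W₁.K → 𝕋 := fun x => -((φ₀ x : 𝕋)) with hφ'
    set g' : 𝕋 → 𝕋 := fun t => -(g t) with hg'
    have hP1' : ∀ a b c : 𝕋, CircBtw a b c → CircBtw (p₂' a) (p₂' b) (p₂' c) := by
      intro a b c h
      have h1 := btw_neg h
      have h2 := hP1 _ _ _ h1
      have h3 := btw_neg h2
      simpa using h3
    have hP2' : ∀ A B : 𝕋, A ∈ K₂' → B ∈ K₂' → A ≠ B → p₂' A = p₂' B →
        ∃ u v : ℝ, u < v ∧ v < u + 1 ∧ (∀ t ∈ Ioo u v, ((t:ℝ):𝕋) ∉ K₂') ∧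
          ((((u:ℝ):𝕋) = A ∧ ((v:ℝ):𝕋) = B) ∨ (((u:ℝ):𝕋) = B ∧ ((v:ℝ):𝕋) = A)) := by
      intro A B hA hB hAB hp
      have hAB' : -A ≠ -B := fun h => hAB (neg_injective h)
      have hp' : pbar W₂.toDenjoySystem (-A) = pbar W₂.toDenjoySystem (-B) :=
        neg_injective (by simpa [hp₂'] using hp)
      obtain ⟨u, v, h1, h2, h4, h5⟩ := hP2 (-A) (-B) hA hB hAB' hp'
      refine ⟨-v, -u, by linarith, by linarith, ?_, ?_⟩
      · intro t ht htK
        refine h4 (-t) ⟨by linarith [ht.2], by linarith [ht.1]⟩ ?_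
        rw [tcoe_neg]
        exact htK
      · rcases h5 with ⟨hu, hv⟩ | ⟨hu, hv⟩
        · refine Or.inr ⟨?_, ?_⟩
          · rw [tcoe_neg, hv]; simp
          · rw [tcoe_neg, hu]; simp
        · refine Or.inl ⟨?_, ?_⟩
          · rw [tcoe_neg, hv]; simp
          · rw [tcoe_neg, hu]; simp
    have hφK' : ∀ x, φ' x ∈ K₂' := fun x => by
      show -(-((φ₀ x : 𝕋))) ∈ W₂.K
      rw [neg_neg]; exact (φ₀ x).2
    have hφinj' : Function.Injective φ' := fun x y h => hφinj (neg_injective h)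
    have hφcont' : Continuous φ' := hφcont.neg
    have hglue' : ∀ x : W₁.K, g' (pbar W₁.toDenjoySystem (x:𝕋)) = p₂' (φ' x) := by
      intro x
      show -(g (pbar W₁.toDenjoySystem (x:𝕋))) = -(pbar W₂.toDenjoySystem (-(-((φ₀ x : 𝕋)))))
      rw [neg_neg, hglue x]
    have hgplus' : ∀ a b c : 𝕋, SBtw a b c → SBtw (g' a) (g' b) (g' c) := by
      intro a b c h
      exact sbtw_neg (hminus _ _ _ h)
    rintro p ⟨a, b, c, hbtw, rfl⟩
    have hres := core_step W₁ K₂' p₂' φ' g' hP1' hP2' hφK' hφinj' hφcont' hglue' hgplus'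
      a b c hbtw
    have hres2 : CircBtw ((φ₀ c : 𝕋)) ((φ₀ b : 𝕋)) ((φ₀ a : 𝕋)) := by
      have h6 := btw_neg hres
      simpa [hφ'] using h6
    show ((W₁.j c : M), W₁.j b, W₁.j a) ∈ W₂.orderGraph
    exact ⟨φ₀ c, φ₀ b, φ₀ a, hres2, by
      rw [transfer_spec W₁ W₂ hrange a, transfer_spec W₁ W₂ hrange b,
        transfer_spec W₁ W₂ hrange c]⟩

lemma exists_three (D : DenjoySystem) :
    ∃ a b c : 𝕋, a ∈ D.K ∧ b ∈ D.K ∧ c ∈ D.K ∧ a ≠ b ∧ b ≠ c ∧ a ≠ c := by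
  obtain ⟨a, ha⟩ := D.K_ne
  have hacc := D.K_perf.acc a ha
  obtain ⟨b, ⟨_, hbK⟩, hba⟩ := accPt_iff_nhds.1 hacc univ univ_mem
  obtain ⟨c, ⟨hcb, hcK⟩, hca⟩ := accPt_iff_nhds.1 hacc {b}ᶜ
    ((isOpen_compl_singleton).mem_nhds (fun h => hba (h.symm)))
  exact ⟨a, b, c, ha, hbK, hcK, fun h => hba h.symm, fun h => hcb h.symm, fun h => hca h.symm⟩

lemma no_self_rev (W : WDS M f) (h : W.orderGraph ⊆ W.revGraph) : False := by
  obtain ⟨a, b, c, ha, hb, hc, hab, hbc, hac⟩ := exists_three W.toDenjoySystem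
  set A : W.K := ⟨a, ha⟩
  set B : W.K := ⟨b, hb⟩
  set C : W.K := ⟨c, hc⟩
  have key : ∀ P Q R : W.K, SBtw (P:𝕋) (Q:𝕋) (R:𝕋) → False := by
    intro P Q R hs
    have hmem : ((W.j P : M), W.j Q, W.j R) ∈ W.orderGraph := ⟨P, Q, R, hs.btw, rfl⟩
    have hrev := h hmem
    obtain ⟨a', b', c', hbtw', heq⟩ := hrev
    rw [Prod.mk.injEq, Prod.mk.injEq] at heq
    obtain ⟨h1, h2, h3⟩ := heq
    have ha' : a' = R := W.j_emb.injective h1.symm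
    have hb' : b' = Q := W.j_emb.injective h2.symm
    have hc' : c' = P := W.j_emb.injective h3.symm
    rw [ha', hb', hc'] at hbtw'
    exact sbtw_asymm hs (sbtw_of_btw_ne hbtw' hs.ne₂₃.symm hs.ne₁₂.symm hs.ne₁₃.symm)
  rcases sbtw_total hab hbc hac with hs | hs
  · exact key A B C hs
  · exact key C B A hs

end Master

end WDSAux


/-- Two equivalent weak Denjoy sub-systems for a same homeomorphism have the same
order graph, up to reversal. -/
theorem equivalent_WDS_order
    {M : Type*} [MetricSpace M] (f : M → M) (hf : IsHomeomorph f)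
    (W₁ W₂ : WDS M f) (hrange : Set.range W₁.j = Set.range W₂.j) :
    W₁.orderGraph = W₂.orderGraph ∨ W₁.orderGraph = W₂.revGraph := by
  rcases WDSAux.graph_incl W₁ W₂ hrange with h12 | h12 <;>
    rcases WDSAux.graph_incl W₂ W₁ hrange.symm with h21 | h21
  · exact Or.inl (subset_antisymm h12 h21)
  · exact (WDSAux.no_self_rev W₁ (fun p hp => h21 (h12 hp))).elim
  · exact (WDSAux.no_self_rev W₂ (fun p hp => h12 (h21 hp))).elim
  · refine Or.inr (subset_antisymm h12 ?_)
    intro p hp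
    have h := h21 hp
    obtain ⟨p1, p2, p3⟩ := p
    exact h
end
end

section
/- Let M be a metric space and f : M → M a homeomorphism. Let (K, j, h) be a weak Denjoy sub-system for f with rotation number α = ρ(h) ∈ 𝕋. Then for every ε > 0 there exists δ > 0 such that for every weak Denjoy sub-system (K₁, j₁, h₁) for f with rotation number α₁ = ρ(h₁): if the Hausdorff distance between j₁(K₁) and j(K) is less than δ, and the Hausdorff distance (in M³ with the sup-product metric) between G(K₁, j₁) and G(K, j) is less than δ or the Hausdorff distance between G(K₁, j₁)⁻ and G(K, j) is less than δ, then dist(α₁, α) < ε or dist(α₁, −α) < ε (distance on 𝕋 = ℝ/ℤ). -/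
open Filter Topology Set

noncomputable section

abbrev 𝕋 := UnitAddCircle




lemma ucoe_eq_iff {x y : ℝ} : (x : 𝕋) = (y : 𝕋) ↔ ∃ k : ℤ, y = x + k := by
  constructor
  · intro hxy
    have : ((y - x : ℝ) : 𝕋) = 0 := by
      rw [AddCircle.coe_sub, hxy, sub_self]
    obtain ⟨n, hn⟩ := (AddCircle.coe_eq_zero_iff _).1 this
    exact ⟨n, by simp at hn; linarith⟩
  · rintro ⟨k, rfl⟩
    have : ((x + k : ℝ) : 𝕋) - (x : 𝕋) = 0 := by
      rw [← AddCircle.coe_sub]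
      simp only [add_sub_cancel_left]
      rw [AddCircle.coe_eq_zero_iff]
      exact ⟨k, by simp⟩
    rw [sub_eq_zero] at this
    exact this.symm

lemma udist_le {x y : ℝ} : dist (x : 𝕋) (y : 𝕋) ≤ |x - y| := by
  rw [dist_eq_norm, ← AddCircle.coe_sub, UnitAddCircle.norm_eq]
  rcases le_or_gt (1/2) (|x - y|) with h | h
  · calc |x - y - round (x - y)| ≤ 1/2 := abs_sub_round _
      _ ≤ |x - y| := h
  · have : round (x - y) = 0 := by
      rw [round_eq_zero_iff]
      constructor
      · linarith [abs_lt.1 h |>.1]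
      · linarith [abs_lt.1 h |>.2]
    simp [this]

lemma exists_lift_near {a b : 𝕋} {e : ℝ} (hd : dist a b < e) {A : ℝ} (hA : (A : 𝕋) = a) :
    ∃ B : ℝ, (B : 𝕋) = b ∧ |A - B| < e := by
  induction b using QuotientAddGroup.induction_on with | H b₀ => ?_
  refine ⟨b₀ + round (A - b₀), ?_, ?_⟩
  · exact (ucoe_eq_iff.2 ⟨round (A - b₀), rfl⟩).symm
  · have : dist a ((b₀ : ℝ) : 𝕋) = |A - b₀ - round (A - b₀)| := by
      rw [← hA, dist_eq_norm, ← AddCircle.coe_sub, UnitAddCircle.norm_eq]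
    rw [show A - (b₀ + round (A - b₀)) = A - b₀ - round (A - b₀) by ring, ← this]
    exact hd


lemma circBtw_self_left (a c : 𝕋) : CircBtw a a c := by
  obtain ⟨A, rfl⟩ : ∃ A : ℝ, (A : 𝕋) = a := by
    induction a using QuotientAddGroup.induction_on with | H A => exact ⟨A, rfl⟩
  obtain ⟨C₀, rfl⟩ : ∃ C : ℝ, (C : 𝕋) = c := by
    induction c using QuotientAddGroup.induction_on with | H C => exact ⟨C, rfl⟩
  refine ⟨A, A, C₀ + ↑(-⌊C₀ - A⌋), rfl, rfl, (ucoe_eq_iff.2 ⟨-⌊C₀ - A⌋, rfl⟩).symm, le_refl _, ?_, ?_⟩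
  · push_cast
    have := Int.floor_le (C₀ - A)
    linarith
  · push_cast
    have := Int.lt_floor_add_one (C₀ - A)
    linarith

lemma circBtw_total (a b c : 𝕋) : CircBtw a b c ∨ CircBtw c b a := by
  obtain ⟨A, rfl⟩ : ∃ A : ℝ, (A : 𝕋) = a := by
    induction a using QuotientAddGroup.induction_on with | H A => exact ⟨A, rfl⟩
  obtain ⟨B₀, rfl⟩ : ∃ B : ℝ, (B : 𝕋) = b := by
    induction b using QuotientAddGroup.induction_on with | H B => exact ⟨B, rfl⟩
  obtain ⟨C₀, rfl⟩ : ∃ C : ℝ, (C : 𝕋) = c := by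
    induction c using QuotientAddGroup.induction_on with | H C => exact ⟨C, rfl⟩
  set B := B₀ + (↑(-⌊B₀ - A⌋) : ℝ) with hBdef
  set C := C₀ + (↑(-⌊C₀ - A⌋) : ℝ) with hCdef
  have hB : (B : 𝕋) = (B₀ : 𝕋) := (ucoe_eq_iff.2 ⟨-⌊B₀ - A⌋, rfl⟩).symm
  have hC : (C : 𝕋) = (C₀ : 𝕋) := (ucoe_eq_iff.2 ⟨-⌊C₀ - A⌋, rfl⟩).symm
  have hB1 : A ≤ B := by
    simp only [hBdef]; push_cast
    have := Int.floor_le (B₀ - A); linarith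
  have hB2 : B < A + 1 := by
    simp only [hBdef]; push_cast
    have := Int.lt_floor_add_one (B₀ - A); linarith
  have hC1 : A ≤ C := by
    simp only [hCdef]; push_cast
    have := Int.floor_le (C₀ - A); linarith
  have hC2 : C < A + 1 := by
    simp only [hCdef]; push_cast
    have := Int.lt_floor_add_one (C₀ - A); linarith
  rcases le_or_gt B C with h | h
  · exact Or.inl ⟨A, B, C, rfl, hB, hC, hB1, h, hC2.le⟩
  · refine Or.inr ⟨C, B, A + 1, hC, hB, ?_, h.le, hB2.le, by linarith⟩
    exact (ucoe_eq_iff.2 ⟨1, by push_cast; ring⟩).symm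

lemma circBtw_not_of_circBtw {a b c : 𝕋} (h1 : CircBtw a b c) (h2 : CircBtw c b a)
    (hab : a ≠ b) (hbc : b ≠ c) (hac : a ≠ c) : False := by
  obtain ⟨A, B, C, hA, hB, hC, h₁, h₂, h₃⟩ := h1
  obtain ⟨C', B', A', hC', hB', hA', g₁, g₂, g₃⟩ := h2
  obtain ⟨u, hu⟩ : ∃ k : ℤ, A' = A + k := ucoe_eq_iff.1 (hA.trans hA'.symm)
  obtain ⟨t, ht⟩ : ∃ k : ℤ, B' = B + k := ucoe_eq_iff.1 (hB.trans hB'.symm)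
  obtain ⟨s, hs⟩ : ∃ k : ℤ, C' = C + k := ucoe_eq_iff.1 (hC.trans hC'.symm)
  have hd1 : (0:ℝ) < B - A := by
    rcases lt_or_eq_of_le h₁ with h | h
    · linarith
    · exact absurd (hA ▸ h ▸ hB) hab
  have hd2 : (0:ℝ) < C - B := by
    rcases lt_or_eq_of_le h₂ with h | h
    · linarith
    · exact absurd (hB ▸ h ▸ hC) hbc
  have hd3 : C - A < 1 := by
    rcases lt_or_eq_of_le h₃ with h | h
    · linarith
    · exact absurd ((hA.symm.trans (ucoe_eq_iff.2 ⟨1, by rw [h]; push_cast; ring⟩)).trans hC) hac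
  -- integer inequalities
  have e1 : (1:ℤ) ≤ t - s := by
    have : (0:ℝ) < (t:ℝ) - s := by
      have := g₁  -- C + s ≤ B + t
      rw [hs, ht] at this; linarith
    exact_mod_cast Int.lt_iff_add_one_le.1 (by exact_mod_cast this : (0:ℤ) < t - s)
  have e2 : (1:ℤ) ≤ u - t := by
    have : (0:ℝ) < (u:ℝ) - t := by
      have := g₂; rw [ht, hu] at this; linarith
    exact_mod_cast Int.lt_iff_add_one_le.1 (by exact_mod_cast this : (0:ℤ) < u - t)
  have e3 : ((u:ℝ) - s) < 2 := by
    have := g₃; rw [hu, hs] at this; linarith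
  have : ((u:ℝ) - s) ≥ 2 := by
    have : (2:ℤ) ≤ u - s := by omega
    exact_mod_cast this
  linarith

/-- Forward extraction: from btw with controlled lifts, an integer strictly between. -/
lemma circBtw_exists_int {U V W : ℝ} (hUV : 0 < V - U) (hUV1 : V - U < 1)
    (hUW : (U : 𝕋) ≠ (W : 𝕋)) (hWV : (W : 𝕋) ≠ (V : 𝕋))
    (h : CircBtw (U : 𝕋) (W : 𝕋) (V : 𝕋)) : ∃ k : ℤ, U < W + k ∧ W + k < V := by
  obtain ⟨A, B, C, hA, hB, hC, h₁, h₂, h₃⟩ := h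
  obtain ⟨s, hs⟩ : ∃ k : ℤ, A = U + k := ucoe_eq_iff.1 hA.symm
  obtain ⟨m, hm⟩ : ∃ k : ℤ, B = W + k := ucoe_eq_iff.1 hB.symm
  obtain ⟨t, ht⟩ : ∃ k : ℤ, C = V + k := ucoe_eq_iff.1 hC.symm
  have hts : t = s := by
    have h1 : (0:ℝ) ≤ (V + t) - (U + s) := by rw [← hs, ← ht]; linarith
    have h2 : (V + t) - (U + s) ≤ (1:ℝ) := by rw [← hs, ← ht]; linarith
    have l1 : (-1:ℝ) < (t:ℝ) - s := by linarith
    have l2 : ((t:ℝ) - s) < 1 := by linarith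
    have : (-1:ℤ) < t - s ∧ (t - s : ℤ) < 1 := ⟨by exact_mod_cast l1, by exact_mod_cast l2⟩
    omega
  refine ⟨m - s, ?_, ?_⟩
  · have hle : U + s ≤ W + m := by rw [← hs, ← hm]; exact h₁
    have hne : U + (s:ℝ) ≠ W + m := by
      intro hcontra
      exact hUW (ucoe_eq_iff.2 ⟨s - m, by push_cast; linarith⟩)
    push_cast; cases lt_or_eq_of_le hle with
    | inl h => linarith
    | inr h => exact absurd h hne
  · have hle : W + m ≤ V + t := by rw [← hm, ← ht]; exact h₂
    have hne : W + (m:ℝ) ≠ V + t := by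
      intro hcontra
      exact hWV (ucoe_eq_iff.2 ⟨m - t, by push_cast; linarith⟩)
    rw [hts] at hle hne
    push_cast; cases lt_or_eq_of_le hle with
    | inl h => linarith
    | inr h => exact absurd h hne

lemma circBtw_of_int {U V W : ℝ} (hUV1 : V ≤ U + 1) {k : ℤ}
    (h1 : U ≤ W + k) (h2 : W + k ≤ V) : CircBtw (U : 𝕋) (W : 𝕋) (V : 𝕋) :=
  ⟨U, W + k, V, rfl, (ucoe_eq_iff.2 ⟨k, rfl⟩).symm, rfl, h1, h2, hUV1⟩

/-- Stability of btw under perturbations that are small relative to pairwise distances. -/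
lemma circBtw_approx {a b c p q r : 𝕋} {e : ℝ}
    (h : CircBtw a b c) (hap : dist a p < e) (hbq : dist b q < e) (hcr : dist c r < e)
    (hpq : 4 * e ≤ dist p q) (hqr : 4 * e ≤ dist q r) (hpr : 4 * e ≤ dist p r) :
    CircBtw p q r := by
  obtain ⟨A, B, C, hA, hB, hC, h₁, h₂, h₃⟩ := h
  obtain ⟨P, hP, hAP⟩ := exists_lift_near hap hA
  obtain ⟨Q, hQ, hBQ⟩ := exists_lift_near hbq hB
  obtain ⟨R, hR, hCR⟩ := exists_lift_near hcr hC
  have habs : ∀ x y : ℝ, ∀ u v : 𝕋, (x : 𝕋) = u → (y : 𝕋) = v → dist u v ≤ |x - y| := by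
    intro x y u v hx hy; rw [← hx, ← hy]; exact udist_le
  have hPQ : P < Q := by
    have hlt : P - Q < 2 * e := by
      have := abs_lt.1 hAP; have := abs_lt.1 hBQ; linarith
    by_contra hge
    push_neg at hge
    have : dist p q ≤ P - Q := by
      have := habs P Q p q hP hQ
      rwa [abs_of_nonneg (by linarith)] at this
    linarith
  have hQR : Q < R := by
    have hlt : Q - R < 2 * e := by
      have := abs_lt.1 hBQ; have := abs_lt.1 hCR; linarith
    by_contra hge
    push_neg at hge
    have : dist q r ≤ Q - R := by
      have := habs Q R q r hQ hR
      rwa [abs_of_nonneg (by linarith)] at this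
    linarith
  have hRP : R ≤ P + 1 := by
    have hlt : R - (P + 1) < 2 * e := by
      have := abs_lt.1 hAP; have := abs_lt.1 hCR; linarith
    by_contra hge
    push_neg at hge
    have hcoe : ((P + 1 : ℝ) : 𝕋) = p := by
      rw [← hP]; exact (ucoe_eq_iff.2 ⟨1, by push_cast; ring⟩).symm
    have : dist r p ≤ R - (P + 1) := by
      have := habs R (P + 1) r p hR hcoe
      rwa [abs_of_nonneg (by linarith)] at this
    rw [dist_comm] at this
    linarith
  exact ⟨P, Q, R, hP, hQ, hR, hPQ.le, hQR.le, hRP⟩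







namespace CircleDeg1Lift

/-- The displacement of a degree-one lift varies by at most 1. -/
lemma disp_le_disp_add_one (g : CircleDeg1Lift) (x y : ℝ) : g x - x ≤ g y - y + 1 := by
  rw [← g.map_fract_sub_fract_eq x, ← g.map_fract_sub_fract_eq y]
  set u := Int.fract x with hu
  set v := Int.fract y with hv
  have hu0 : 0 ≤ u := Int.fract_nonneg x
  have hu1 : u < 1 := Int.fract_lt_one x
  have hv0 : 0 ≤ v := Int.fract_nonneg y
  have hv1 : v < 1 := Int.fract_lt_one y
  rcases le_total u v with h | h
  · have : g u ≤ g v := g.mono h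
    linarith
  · have : g u ≤ g v + 1 := by
      calc g u ≤ g (v + 1) := g.mono (by linarith)
        _ = g v + 1 := g.map_add_one v
    linarith

lemma abs_disp_sub_translationNumber_le (g : CircleDeg1Lift) (x : ℝ) :
    |g x - x - g.translationNumber| ≤ 2 := by
  have h0 : |g 0 - g.translationNumber| ≤ 1 := by
    have := g.dist_map_zero_translationNumber_le
    rwa [Real.dist_eq] at this
  have h1 := g.disp_le_disp_add_one x 0
  have h2 := g.disp_le_disp_add_one 0 x
  rw [abs_le] at h0 ⊢
  constructor <;> [linarith [h0.1]; linarith [h0.2]]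

lemma abs_iter_sub_translationNumber_le (g : CircleDeg1Lift) (k : ℕ) (x : ℝ) :
    |g^[k] x - x - k * g.translationNumber| ≤ 2 := by
  have := (g ^ k).abs_disp_sub_translationNumber_le x
  rwa [coe_pow, translationNumber_pow] at this

end CircleDeg1Lift

namespace DenjoySystem

variable (D : DenjoySystem)

/-- The lift as a bundled `CircleDeg1Lift`. -/
def F : CircleDeg1Lift := ⟨⟨D.lift, D.lift_mono.monotone⟩, D.lift_add⟩

@[simp] lemma coe_F : ⇑D.F = D.lift := rfl

lemma tau_F : D.F.translationNumber = D.rot :=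
  D.F.translationNumber_eq_of_tendsto₀ D.rot_lim

/-- The normalized lift, with translation number in `(0,1)`. -/
def G : CircleDeg1Lift :=
  ⟨⟨fun x => D.lift x - ⌊D.rot⌋, fun x y hxy => by
      simp only; exact sub_le_sub_right (D.lift_mono.monotone hxy) _⟩,
    fun x => by simp only; rw [D.lift_add]; ring⟩

@[simp] lemma coe_G : ⇑D.G = fun x => D.lift x - ⌊D.rot⌋ := rfl

def β : ℝ := Int.fract D.rot

lemma G_iter (k : ℕ) (x : ℝ) : D.G^[k] x = D.lift^[k] x - ((k : ℤ) * ⌊D.rot⌋ : ℤ) := by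
  induction k with
  | zero => simp
  | succ k ih =>
    have hG : ∀ y, D.G y = D.lift y - (⌊D.rot⌋ : ℝ) := fun _ => rfl
    rw [Function.iterate_succ_apply', Function.iterate_succ_apply', hG, ih]
    have hmap := D.F.map_add_int (D.lift^[k] x) (-((k : ℤ) * ⌊D.rot⌋))
    simp only [coe_F] at hmap
    have hkey : D.lift (D.lift^[k] x - ((k : ℤ) * ⌊D.rot⌋ : ℤ))
        = D.lift (D.lift^[k] x) - ((k : ℤ) * ⌊D.rot⌋ : ℤ) := by
      rw [show (D.lift^[k] x - ((k : ℤ) * ⌊D.rot⌋ : ℤ) : ℝ)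
          = D.lift^[k] x + ((-((k : ℤ) * ⌊D.rot⌋) : ℤ) : ℝ) by push_cast; ring, hmap]
      push_cast
      ring
    rw [hkey]
    push_cast
    ring

lemma tau_G : D.G.translationNumber = D.β := by
  apply D.G.translationNumber_eq_of_tendsto₀
  have hcongr : (fun n : ℕ => D.lift^[n] 0 / (n : ℝ) - ⌊D.rot⌋) =ᶠ[atTop]
      (fun n : ℕ => D.G^[n] 0 / (n : ℝ)) := by
    filter_upwards [eventually_ge_atTop 1] with n hn
    rw [D.G_iter n 0]
    have hn0 : (n : ℝ) ≠ 0 := by positivity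
    push_cast
    field_simp
  have : Tendsto (fun n : ℕ => D.lift^[n] 0 / (n : ℝ) - ⌊D.rot⌋) atTop (𝓝 (D.rot - ⌊D.rot⌋)) :=
    D.rot_lim.sub tendsto_const_nhds
  rw [show D.rot - ⌊D.rot⌋ = D.β from Int.self_sub_floor D.rot] at this
  exact this.congr' hcongr

lemma β_pos : 0 < D.β := by
  rw [β, Int.fract_pos]
  intro h
  exact (D.rot_irr.ne_int ⌊D.rot⌋) h

lemma β_lt_one : D.β < 1 := Int.fract_lt_one _

lemma β_irr : Irrational D.β := by
  rw [β, ← Int.self_sub_floor]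
  exact D.rot_irr.sub_intCast _

lemma rot_coe_eq_β_coe : ((D.rot : ℝ) : 𝕋) = ((D.β : ℝ) : 𝕋) :=
  ucoe_eq_iff.2 ⟨-⌊D.rot⌋, by rw [β, ← Int.self_sub_floor]; push_cast; ring⟩

lemma G_proj (x : ℝ) : ((D.G x : ℝ) : 𝕋) = D.h (x : 𝕋) := by
  rw [← D.lift_proj x]
  exact ucoe_eq_iff.2 ⟨⌊D.rot⌋, by simp [coe_G]⟩

lemma lt_G (x : ℝ) : x < D.G x := by
  by_contra hc
  push_neg at hc
  have : D.G.translationNumber ≤ ((0 : ℤ) : ℝ) :=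
    D.G.translationNumber_le_of_le_add_int (by simpa using hc)
  rw [D.tau_G] at this
  have h0 : D.β ≤ 0 := by exact_mod_cast this
  linarith [D.β_pos]

lemma G_lt_add_one (x : ℝ) : D.G x < x + 1 := by
  by_contra hc
  push_neg at hc
  have : ((1 : ℤ) : ℝ) ≤ D.G.translationNumber :=
    D.G.le_translationNumber_of_add_int_le (by simpa using hc)
  rw [D.tau_G] at this
  have h0 : (1 : ℝ) ≤ D.β := by exact_mod_cast this
  linarith [D.β_lt_one]

lemma G_iter_ne_add_int {k : ℕ} (hk : 0 < k) (x : ℝ) (m : ℤ) : D.G^[k] x ≠ x + m := by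
  intro hc
  have hpow : (D.G ^ k) x = x + m := by rw [CircleDeg1Lift.coe_pow]; exact hc
  have := D.G.translationNumber_of_map_pow_eq_add_int hpow hk
  rw [D.tau_G] at this
  refine D.β_irr ⟨(m : ℚ) / (k : ℚ), ?_⟩
  rw [this]
  push_cast
  ring

lemma G_orbit_distinct {i j : ℕ} (hij : i < j) (x : ℝ) :
    ((D.G^[i] x : ℝ) : 𝕋) ≠ ((D.G^[j] x : ℝ) : 𝕋) := by
  intro hc
  obtain ⟨m, hm⟩ := ucoe_eq_iff.1 hc
  have hdecomp : D.G^[j] x = D.G^[j - i] (D.G^[i] x) := by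
    rw [← Function.iterate_add_apply]
    congr 1
    omega
  exact D.G_iter_ne_add_int (k := j - i) (by omega) (D.G^[i] x) m (by rw [← hdecomp, ← hm])

/-- The orbit displacement `u i`. -/
def u (X : ℝ) (i : ℕ) : ℝ := D.G^[i] X - X

lemma u_step_pos (X : ℝ) (i : ℕ) : 0 < D.u X (i+1) - D.u X i := by
  simp only [u, Function.iterate_succ_apply']
  have := D.lt_G (D.G^[i] X)
  linarith

lemma u_step_lt_one (X : ℝ) (i : ℕ) : D.u X (i+1) - D.u X i < 1 := by
  simp only [u, Function.iterate_succ_apply']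
  have := D.G_lt_add_one (D.G^[i] X)
  linarith

lemma u_not_int (X : ℝ) {i : ℕ} (hi : 0 < i) (m : ℤ) : D.u X i ≠ m := by
  intro hc
  exact D.G_iter_ne_add_int hi X m (by rw [u] at hc; linarith)

lemma floor_u_step (X : ℝ) (i : ℕ) :
    ⌊D.u X (i+1)⌋ = ⌊D.u X i⌋ ∨ ⌊D.u X (i+1)⌋ = ⌊D.u X i⌋ + 1 := by
  have h1 : ⌊D.u X i⌋ ≤ ⌊D.u X (i+1)⌋ :=
    Int.floor_le_floor (by linarith [D.u_step_pos X i])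
  have h2 : ⌊D.u X (i+1)⌋ ≤ ⌊D.u X i⌋ + 1 := by
    rw [← Int.floor_add_one]
    exact Int.floor_le_floor (by linarith [D.u_step_lt_one X i])
  omega

/-- The key combinatorial equivalence: the cyclic order of three consecutive-orbit points
    detects the crossing of the base point. -/
lemma circBtw_iff_floor (X : ℝ) (i : ℕ) :
    CircBtw ((D.G^[i+1] X : ℝ) : 𝕋) ((X : ℝ) : 𝕋) ((D.G^[i+2] X : ℝ) : 𝕋) ↔
      ⌊D.u X (i+2)⌋ = ⌊D.u X (i+1)⌋ + 1 := by
  constructor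
  · intro hbtw
    obtain ⟨k, hk1, hk2⟩ := circBtw_exists_int
      (by have := D.u_step_pos X (i+1); simp only [u] at this; linarith)
      (by have := D.u_step_lt_one X (i+1); simp only [u] at this; linarith)
      (by simpa using (D.G_orbit_distinct (Nat.zero_lt_succ i) X).symm)
      (by simpa using D.G_orbit_distinct (Nat.zero_lt_succ (i+1)) X)
      hbtw
    have hk1' : D.u X (i+1) < k := by rw [u]; linarith
    have hk2' : (k : ℝ) < D.u X (i+2) := by rw [u]; linarith
    have l1 : ⌊D.u X (i+1)⌋ < k := Int.floor_lt.2 hk1'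
    have l2 : k ≤ ⌊D.u X (i+2)⌋ := Int.le_floor.2 hk2'.le
    have hstep : ⌊D.u X (i+2)⌋ = ⌊D.u X (i+1)⌋ ∨ ⌊D.u X (i+2)⌋ = ⌊D.u X (i+1)⌋ + 1 :=
      D.floor_u_step X (i+1)
    omega
  · intro hfl
    refine circBtw_of_int (k := ⌊D.u X (i+1)⌋ + 1) ?_ ?_ ?_
    · have := D.u_step_lt_one X (i+1); simp only [u] at this; linarith
    · have h := Int.lt_floor_add_one (D.u X (i+1))
      simp only [u] at h ⊢; push_cast; linarith
    · have hle : ((⌊D.u X (i+1)⌋ + 1 : ℤ) : ℝ) ≤ D.u X (i+2) := by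
        rw [← hfl]; exact Int.floor_le _
      simp only [u] at hle ⊢; push_cast at hle ⊢; linarith

open scoped Classical in
lemma sum_circBtw (X : ℝ) (N : ℕ) :
    (∑ i ∈ Finset.range N,
      (if CircBtw ((D.G^[i+1] X : ℝ) : 𝕋) ((X : ℝ) : 𝕋) ((D.G^[i+2] X : ℝ) : 𝕋)
        then (1 : ℤ) else 0)) = ⌊D.u X (N+1)⌋ := by
  classical
  have hterm : ∀ i,
      (if CircBtw ((D.G^[i+1] X : ℝ) : 𝕋) ((X : ℝ) : 𝕋) ((D.G^[i+2] X : ℝ) : 𝕋)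
        then (1 : ℤ) else 0) = ⌊D.u X (i+2)⌋ - ⌊D.u X (i+1)⌋ := by
    intro i
    by_cases hb : CircBtw ((D.G^[i+1] X : ℝ) : 𝕋) ((X : ℝ) : 𝕋) ((D.G^[i+2] X : ℝ) : 𝕋)
    · rw [if_pos hb, (D.circBtw_iff_floor X i).1 hb]; ring
    · rw [if_neg hb]
      rcases D.floor_u_step X (i+1) with h | h
      · rw [h]; ring
      · exact absurd ((D.circBtw_iff_floor X i).2 h) hb
  rw [Finset.sum_congr rfl (fun i _ => hterm i)]
  rw [Finset.sum_range_sub (fun i => ⌊D.u X (i+1)⌋) N]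
  have hu1 : ⌊D.u X 1⌋ = 0 := by
    rw [Int.floor_eq_zero_iff]
    constructor
    · have := D.u_step_pos X 0
      have hu0 : D.u X 0 = 0 := by simp [u]
      rw [hu0] at this; linarith
    · have := D.u_step_lt_one X 0
      have hu0 : D.u X 0 = 0 := by simp [u]
      rw [hu0] at this; simpa using this
  rw [hu1]; ring

lemma floor_u_close (X : ℝ) (N : ℕ) :
    |(⌊D.u X (N+1)⌋ : ℝ) - (N+1) * D.β| ≤ 3 := by
  have h1 := D.G.abs_iter_sub_translationNumber_le (N+1) X
  rw [D.tau_G] at h1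
  have h2 : (⌊D.u X (N+1)⌋ : ℝ) ≤ D.u X (N+1) := Int.floor_le _
  have h3 : D.u X (N+1) < ⌊D.u X (N+1)⌋ + 1 := Int.lt_floor_add_one _
  have : D.u X (N+1) = D.G^[N+1] X - X := rfl
  rw [abs_le] at h1 ⊢
  push_cast at h1 ⊢
  constructor <;> [linarith [h1.1]; linarith [h1.2]]

end DenjoySystem




/-- Uniform injectivity of a continuous injective map on a compact set. -/
lemma uniform_inj {M : Type*} [MetricSpace M] {K : Set 𝕋} (hK : IsCompact K)
    (j : K → M) (hc : Continuous j) (hi : Function.Injective j) :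
    ∀ e > (0 : ℝ), ∃ θ > (0 : ℝ), ∀ p q : K, dist (j p) (j q) < θ → dist (p : 𝕋) (q : 𝕋) < e := by
  intro e he
  haveI : CompactSpace K := isCompact_iff_compactSpace.mp hK
  set S : Set (K × K) := {pq | e ≤ dist (pq.1 : 𝕋) (pq.2 : 𝕋)} with hSdef
  have hcd : Continuous fun pq : K × K => dist (pq.1 : 𝕋) (pq.2 : 𝕋) :=
    (continuous_subtype_val.comp continuous_fst).dist (continuous_subtype_val.comp continuous_snd)
  have hSclosed : IsClosed S := isClosed_le continuous_const hcd
  have hScpt : IsCompact S := hSclosed.isCompact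
  rcases S.eq_empty_or_nonempty with hS | hS
  · refine ⟨1, one_pos, fun p q _ => ?_⟩
    by_contra hge
    push_neg at hge
    have : (p, q) ∈ S := hge
    rw [hS] at this
    exact Set.notMem_empty _ this
  · have hcf : Continuous fun pq : K × K => dist (j pq.1) (j pq.2) :=
      (hc.comp continuous_fst).dist (hc.comp continuous_snd)
    obtain ⟨pq₀, hpq₀S, hmin⟩ := hScpt.exists_isMinOn hS hcf.continuousOn
    refine ⟨dist (j pq₀.1) (j pq₀.2), ?_, ?_⟩
    · have hne : pq₀.1 ≠ pq₀.2 := by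
        intro h
        have : e ≤ dist (pq₀.1 : 𝕋) (pq₀.2 : 𝕋) := hpq₀S
        rw [h, dist_self] at this
        linarith
      exact dist_pos.2 fun h => hne (hi h)
    · intro p q hlt
      by_contra hge
      push_neg at hge
      have hmem : (p, q) ∈ S := hge
      have h2 : dist (j pq₀.1) (j pq₀.2) ≤ dist (j p) (j q) := hmin hmem
      linarith

/-- Simultaneous continuity modulus for finitely many iterates. -/
lemma iter_cont {M : Type*} [MetricSpace M] {f : M → M} (hf : Continuous f) (w : M)
    {η : ℝ} (hη : 0 < η) (N : ℕ) :
    ∃ δ > (0 : ℝ), ∀ i ≤ N, ∀ z, dist z w < δ → dist (f^[i] z) (f^[i] w) < η := by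
  induction N with
  | zero =>
    exact ⟨η, hη, fun i hi z hz => by
      interval_cases i
      simpa using hz⟩
  | succ N ih =>
    obtain ⟨δ₀, hδ₀, h₀⟩ := ih
    have hca : ContinuousAt (f^[N+1]) w := (hf.iterate (N+1)).continuousAt
    rw [Metric.continuousAt_iff] at hca
    obtain ⟨δ₁, hδ₁, h₁⟩ := hca η hη
    refine ⟨min δ₀ δ₁, lt_min hδ₀ hδ₁, fun i hi z hz => ?_⟩
    rcases Nat.lt_succ_iff_lt_or_eq.1 (Nat.lt_succ_of_le hi) with h | rfl
    · exact h₀ i (Nat.lt_succ_iff.1 h) z (hz.trans_le (min_le_left _ _))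
    · exact h₁ (hz.trans_le (min_le_right _ _))

set_option maxHeartbeats 1000000 in
/-- The rotation number of a weak Denjoy sub-system depends continuously (up to sign)
on the WDS, for the topology given by the Hausdorff distance on the images and on the
order graphs. -/
theorem rotation_number_continuous
    {M : Type*} [MetricSpace M] (f : M → M) (hf : IsHomeomorph f)
    (W : WDS M f) :
    ∀ ε > (0 : ℝ), ∃ δ > (0 : ℝ), ∀ W₁ : WDS M f,
      Metric.hausdorffDist (Set.range W₁.j) (Set.range W.j) < δ →
      (Metric.hausdorffDist W₁.orderGraph W.orderGraph < δ ∨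
        Metric.hausdorffDist W₁.revGraph W.orderGraph < δ) →
      (dist (W₁.rot : UnitAddCircle) (W.rot : UnitAddCircle) < ε ∨
        dist (W₁.rot : UnitAddCircle) (-(W.rot : UnitAddCircle)) < ε) := by
  classical
  intro ε hε
  obtain ⟨x₀, hx₀K⟩ := W.K_ne
  obtain ⟨X, hX⟩ := QuotientAddGroup.mk_surjective x₀
  set D := W.toDenjoySystem with hD
  set N : ℕ := ⌈8 / ε⌉₊ with hNdef
  have hNpos : (0:ℝ) < (N:ℝ) + 1 := by positivity
  have hN8 : 8 / ε < (N : ℝ) + 1 := lt_of_le_of_lt (Nat.le_ceil _) (by linarith)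
  have hNε : 8 / ((N:ℝ)+1) < ε := by
    rw [div_lt_iff₀ hNpos]
    have h8 : (8:ℝ) = (8/ε) * ε := by field_simp
    calc (8:ℝ) = (8/ε) * ε := h8
      _ < ((N:ℝ)+1) * ε := mul_lt_mul_of_pos_right hN8 hε
      _ = ε * ((N:ℝ)+1) := by ring
  -- the orbit of `x₀` under `W`
  set xpt : ℕ → UnitAddCircle := fun i => ((D.G^[i] X : ℝ) : UnitAddCircle) with hxpt
  have hxpt0 : xpt 0 = x₀ := hX
  have hxpt_h : ∀ i, xpt (i+1) = W.h (xpt i) := by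
    intro i
    show ((D.G^[i+1] X : ℝ) : UnitAddCircle) = W.h ((D.G^[i] X : ℝ) : UnitAddCircle)
    rw [Function.iterate_succ_apply']
    exact D.G_proj _
  have hxptK : ∀ i, xpt i ∈ W.K := by
    intro i
    induction i with
    | zero => rw [hxpt0]; exact hx₀K
    | succ i ih =>
      rw [hxpt_h i, ← W.K_inv]
      exact Set.mem_image_of_mem _ ih
  set xK : ℕ → W.K := fun i => ⟨xpt i, hxptK i⟩ with hxK
  have hxiter : ∀ i, W.j (xK i) = f^[i] (W.j (xK 0)) := by
    intro i
    induction i with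
    | zero => rfl
    | succ i ih =>
      rw [Function.iterate_succ_apply', ← ih]
      exact W.equivar (xK i) (xK (i+1)) (hxpt_h i).symm
  -- distinctness and pairwise margin
  have hdistinct : ∀ i j : ℕ, i < j → xpt i ≠ xpt j := fun i j hij => D.G_orbit_distinct hij X
  set P : Finset (ℕ × ℕ) :=
    (Finset.range (N+2) ×ˢ Finset.range (N+2)).filter (fun p => p.1 < p.2) with hP
  have hPne : P.Nonempty := by
    refine ⟨(0,1), ?_⟩
    rw [hP]
    simp only [Finset.mem_filter, Finset.mem_product, Finset.mem_range]
    omega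
  set m₁ : ℝ := P.inf' hPne (fun p => dist (xpt p.1) (xpt p.2)) with hm₁
  have hm₁pos : 0 < m₁ := by
    rw [hm₁, Finset.lt_inf'_iff]
    intro p hp
    rw [hP, Finset.mem_filter] at hp
    exact dist_pos.2 (hdistinct p.1 p.2 hp.2)
  set e : ℝ := m₁ / 4 with he
  have hepos : 0 < e := by rw [he]; positivity
  have hpair : ∀ a b : ℕ, a ≤ N+1 → b ≤ N+1 → a ≠ b → 4 * e ≤ dist (xpt a) (xpt b) := by
    intro a b ha hb hab
    have h4 : 4 * e = m₁ := by rw [he]; ring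
    rcases lt_or_gt_of_ne hab with h | h
    · have hmem : ((a, b) : ℕ × ℕ) ∈ P := by
        rw [hP]
        simp only [Finset.mem_filter, Finset.mem_product, Finset.mem_range]
        omega
      rw [h4, hm₁]
      exact Finset.inf'_le _ hmem
    · have hmem : ((b, a) : ℕ × ℕ) ∈ P := by
        rw [hP]
        simp only [Finset.mem_filter, Finset.mem_product, Finset.mem_range]
        omega
      rw [h4, hm₁, dist_comm]
      exact Finset.inf'_le _ hmem
  -- modulus of injectivity and iterate continuity
  obtain ⟨θ, hθpos, hθ⟩ := uniform_inj W.K_cpt W.j W.j_emb.continuous W.j_emb.injective e hepos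
  obtain ⟨δ₀, hδ₀pos, hδ₀⟩ := iter_cont hf.continuous (W.j (xK 0)) (half_pos hθpos) (N+1)
  refine ⟨min δ₀ (θ/2), lt_min hδ₀pos (half_pos hθpos), ?_⟩
  intro W₁ hrange hgraph
  set D₁ := W₁.toDenjoySystem with hD₁
  haveI : CompactSpace W.K := isCompact_iff_compactSpace.mp W.K_cpt
  haveI : CompactSpace W₁.K := isCompact_iff_compactSpace.mp W₁.K_cpt
  haveI : Nonempty W.K := ⟨xK 0⟩
  haveI : Nonempty W₁.K := ⟨⟨W₁.K_ne.choose, W₁.K_ne.choose_spec⟩⟩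
  have hWrange_cpt : IsCompact (Set.range W.j) := isCompact_range W.j_emb.continuous
  have hW₁range_cpt : IsCompact (Set.range W₁.j) := isCompact_range W₁.j_emb.continuous
  have hfinrange : EMetric.hausdorffEdist (Set.range W₁.j) (Set.range W.j) ≠ ⊤ :=
    Metric.hausdorffEdist_ne_top_of_nonempty_of_bounded (Set.range_nonempty _)
      (Set.range_nonempty _) hW₁range_cpt.isBounded hWrange_cpt.isBounded
  -- find a starting point of `W₁` close to `x₀`'s image
  obtain ⟨z, hzmem, hzdist⟩ := Metric.exists_dist_lt_of_hausdorffDist_lt'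
    (show W.j (xK 0) ∈ Set.range W.j from ⟨xK 0, rfl⟩) hrange hfinrange
  obtain ⟨y₀, hy₀⟩ := hzmem
  obtain ⟨X₁, hX₁⟩ := QuotientAddGroup.mk_surjective (y₀ : UnitAddCircle)
  set ypt : ℕ → UnitAddCircle := fun i => ((D₁.G^[i] X₁ : ℝ) : UnitAddCircle) with hypt
  have hypt0 : ypt 0 = ↑y₀ := hX₁
  have hypt_h : ∀ i, ypt (i+1) = W₁.h (ypt i) := by
    intro i
    show ((D₁.G^[i+1] X₁ : ℝ) : UnitAddCircle) = W₁.h ((D₁.G^[i] X₁ : ℝ) : UnitAddCircle)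
    rw [Function.iterate_succ_apply']
    exact D₁.G_proj _
  have hyptK : ∀ i, ypt i ∈ W₁.K := by
    intro i
    induction i with
    | zero => rw [hypt0]; exact y₀.2
    | succ i ih =>
      rw [hypt_h i, ← W₁.K_inv]
      exact Set.mem_image_of_mem _ ih
  set yK : ℕ → W₁.K := fun i => ⟨ypt i, hyptK i⟩ with hyK
  have hyK0 : W₁.j (yK 0) = z := by
    rw [← hy₀]
    congr 1
    exact Subtype.ext hypt0
  have hyiter : ∀ i, W₁.j (yK i) = f^[i] (W₁.j (yK 0)) := by
    intro i
    induction i with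
    | zero => rfl
    | succ i ih =>
      rw [Function.iterate_succ_apply', ← ih]
      exact W₁.equivar (yK i) (yK (i+1)) (hypt_h i).symm
  have hclose : ∀ i, i ≤ N+1 → dist (W₁.j (yK i)) (W.j (xK i)) < θ/2 := by
    intro i hi
    rw [hyiter i, hxiter i, hyK0]
    exact hδ₀ i hi z (lt_of_lt_of_le hzdist (min_le_left _ _))
  -- boundedness of graphs
  have hGsub : W.orderGraph ⊆ (Set.range W.j) ×ˢ ((Set.range W.j) ×ˢ (Set.range W.j)) := by
    rintro p ⟨a, b, c, -, rfl⟩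
    exact ⟨⟨a, rfl⟩, ⟨b, rfl⟩, ⟨c, rfl⟩⟩
  have hG₁sub : W₁.orderGraph ⊆ (Set.range W₁.j) ×ˢ ((Set.range W₁.j) ×ˢ (Set.range W₁.j)) := by
    rintro p ⟨a, b, c, -, rfl⟩
    exact ⟨⟨a, rfl⟩, ⟨b, rfl⟩, ⟨c, rfl⟩⟩
  have hGrev₁sub : W₁.revGraph ⊆ (Set.range W₁.j) ×ˢ ((Set.range W₁.j) ×ˢ (Set.range W₁.j)) := by
    rintro p ⟨a, b, c, -, heq⟩
    have h1 : p.2.2 = W₁.j a := congrArg Prod.fst heq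
    have h2 : p.2.1 = W₁.j b := congrArg (fun q => q.2.1) heq
    have h3 : p.1 = W₁.j c := congrArg (fun q => q.2.2) heq
    exact ⟨⟨c, h3.symm⟩, ⟨b, h2.symm⟩, ⟨a, h1.symm⟩⟩
  have hGbdd : Bornology.IsBounded W.orderGraph :=
    ((hWrange_cpt.isBounded.prod (hWrange_cpt.isBounded.prod hWrange_cpt.isBounded)).subset hGsub)
  have hG₁bdd : Bornology.IsBounded W₁.orderGraph :=
    ((hW₁range_cpt.isBounded.prod (hW₁range_cpt.isBounded.prod hW₁range_cpt.isBounded)).subset hG₁sub)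
  have hGrev₁bdd : Bornology.IsBounded W₁.revGraph :=
    ((hW₁range_cpt.isBounded.prod (hW₁range_cpt.isBounded.prod hW₁range_cpt.isBounded)).subset hGrev₁sub)
  have hGne : W.orderGraph.Nonempty :=
    ⟨(W.j (xK 0), W.j (xK 0), W.j (xK 0)), xK 0, xK 0, xK 0, circBtw_self_left _ _, rfl⟩
  have hG₁ne : W₁.orderGraph.Nonempty :=
    ⟨(W₁.j (yK 0), W₁.j (yK 0), W₁.j (yK 0)), yK 0, yK 0, yK 0, circBtw_self_left _ _, rfl⟩
  have hGrev₁ne : W₁.revGraph.Nonempty :=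
    ⟨(W₁.j (yK 0), W₁.j (yK 0), W₁.j (yK 0)), yK 0, yK 0, yK 0, circBtw_self_left _ _, rfl⟩
  -- shared approximation step
  have approx : ∀ a b c : ℕ, a ≤ N+1 → b ≤ N+1 → c ≤ N+1 → a ≠ b → b ≠ c → a ≠ c →
      ∀ q ∈ W.orderGraph,
        dist ((W₁.j (yK a), W₁.j (yK b), W₁.j (yK c)) : M × M × M) q < θ/2 →
        CircBtw (xpt a) (xpt b) (xpt c) := by
    intro a b c ha hb hc hab hbc hac q hq hdq
    obtain ⟨a', b', c', hbtw', rfl⟩ := hq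
    rw [Prod.dist_eq] at hdq
    rw [Prod.dist_eq] at hdq
    rw [max_lt_iff, max_lt_iff] at hdq
    obtain ⟨hd1, hd2, hd3⟩ := hdq
    have key : ∀ (i : ℕ) (w : W.K), i ≤ N+1 → dist (W₁.j (yK i)) (W.j w) < θ/2 →
        dist ((w : UnitAddCircle)) (xpt i) < e := by
      intro i w hi hw
      have hjj : dist (W.j w) (W.j (xK i)) < θ := by
        calc dist (W.j w) (W.j (xK i))
            ≤ dist (W.j w) (W₁.j (yK i)) + dist (W₁.j (yK i)) (W.j (xK i)) := dist_triangle _ _ _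
          _ < θ/2 + θ/2 := add_lt_add (by rw [dist_comm]; exact hw) (hclose i hi)
          _ = θ := by ring
      exact hθ w (xK i) hjj
    exact circBtw_approx hbtw' (key a a' ha hd1) (key b b' hb hd2) (key c c' hc hd3)
      (hpair a b ha hb hab) (hpair b c hb hc hbc) (hpair a c ha hc hac)
  -- the two counting sums
  have hsumW : (∑ i ∈ Finset.range N,
      if CircBtw (xpt (i+1)) (xpt 0) (xpt (i+2)) then (1:ℤ) else 0) = ⌊D.u X (N+1)⌋ :=
    D.sum_circBtw X N
  have hsum₁ : (∑ i ∈ Finset.range N,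
      if CircBtw (ypt (i+1)) (ypt 0) (ypt (i+2)) then (1:ℤ) else 0) = ⌊D₁.u X₁ (N+1)⌋ :=
    D₁.sum_circBtw X₁ N
  have hbW : |(⌊D.u X (N+1)⌋ : ℝ) - ((N:ℝ)+1) * D.β| ≤ 3 := D.floor_u_close X N
  have hb₁ : |(⌊D₁.u X₁ (N+1)⌋ : ℝ) - ((N:ℝ)+1) * D₁.β| ≤ 3 := D₁.floor_u_close X₁ N
  have hrotW : ((W.rot : ℝ) : UnitAddCircle) = ((D.β : ℝ) : UnitAddCircle) := D.rot_coe_eq_β_coe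
  have hrot₁ : ((W₁.rot : ℝ) : UnitAddCircle) = ((D₁.β : ℝ) : UnitAddCircle) := D₁.rot_coe_eq_β_coe
  rcases hgraph with hG | hGrev
  · -- direct order case
    left
    have hfinG : EMetric.hausdorffEdist W₁.orderGraph W.orderGraph ≠ ⊤ :=
      Metric.hausdorffEdist_ne_top_of_nonempty_of_bounded hG₁ne hGne hG₁bdd hGbdd
    have transfer : ∀ a b c : ℕ, a ≤ N+1 → b ≤ N+1 → c ≤ N+1 → a ≠ b → b ≠ c → a ≠ c →
        CircBtw (ypt a) (ypt b) (ypt c) → CircBtw (xpt a) (xpt b) (xpt c) := by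
      intro a b c ha hb hc hab hbc hac hbtw
      have hmem : ((W₁.j (yK a), W₁.j (yK b), W₁.j (yK c)) : M × M × M) ∈ W₁.orderGraph :=
        ⟨yK a, yK b, yK c, hbtw, rfl⟩
      obtain ⟨q, hqG, hdq⟩ := Metric.exists_dist_lt_of_hausdorffDist_lt hmem hG hfinG
      exact approx a b c ha hb hc hab hbc hac q hqG
        (lt_of_lt_of_le hdq (min_le_right _ _))
    have hiff : ∀ i, i < N →
        (CircBtw (ypt (i+1)) (ypt 0) (ypt (i+2)) ↔ CircBtw (xpt (i+1)) (xpt 0) (xpt (i+2))) := by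
      intro i hi
      constructor
      · exact transfer (i+1) 0 (i+2) (by omega) (by omega) (by omega)
          (by omega) (by omega) (by omega)
      · intro hx
        by_contra hy
        have hyrev : CircBtw (ypt (i+2)) (ypt 0) (ypt (i+1)) :=
          (circBtw_total (ypt (i+1)) (ypt 0) (ypt (i+2))).resolve_left hy
        have hxrev : CircBtw (xpt (i+2)) (xpt 0) (xpt (i+1)) :=
          transfer (i+2) 0 (i+1) (by omega) (by omega) (by omega)
            (by omega) (by omega) (by omega) hyrev
        exact circBtw_not_of_circBtw hx hxrev
          (hdistinct 0 (i+1) (by omega)).symm (hdistinct 0 (i+2) (by omega))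
          (hdistinct (i+1) (i+2) (by omega))
    have hsum_eq : (∑ i ∈ Finset.range N,
        if CircBtw (ypt (i+1)) (ypt 0) (ypt (i+2)) then (1:ℤ) else 0) =
        (∑ i ∈ Finset.range N,
        if CircBtw (xpt (i+1)) (xpt 0) (xpt (i+2)) then (1:ℤ) else 0) :=
      Finset.sum_congr rfl fun i hi => if_congr (hiff i (Finset.mem_range.1 hi)) rfl rfl
    have hfloor_eq : (⌊D₁.u X₁ (N+1)⌋ : ℝ) = (⌊D.u X (N+1)⌋ : ℝ) := by
      have hz : ⌊D₁.u X₁ (N+1)⌋ = ⌊D.u X (N+1)⌋ := by rw [← hsum₁, ← hsumW]; exact hsum_eq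
      exact_mod_cast congrArg (Int.cast : ℤ → ℝ) hz
    have hdiffabs : |((N:ℝ)+1) * (D₁.β - D.β)| ≤ 6 := by
      rw [abs_le] at hbW hb₁ ⊢
      rw [hfloor_eq] at hb₁
      constructor <;> nlinarith [hbW.1, hbW.2, hb₁.1, hb₁.2]
    have hdiff : |D₁.β - D.β| ≤ 6 / ((N:ℝ)+1) := by
      rw [le_div_iff₀ hNpos]
      calc |D₁.β - D.β| * ((N:ℝ)+1) = |((N:ℝ)+1) * (D₁.β - D.β)| := by
            rw [abs_mul, abs_of_pos hNpos]; ring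
        _ ≤ 6 := hdiffabs
    calc dist ((W₁.rot : ℝ) : UnitAddCircle) ((W.rot : ℝ) : UnitAddCircle)
        = dist ((D₁.β : ℝ) : UnitAddCircle) ((D.β : ℝ) : UnitAddCircle) := by
          rw [hrotW, hrot₁]
      _ ≤ |D₁.β - D.β| := udist_le
      _ ≤ 6 / ((N:ℝ)+1) := hdiff
      _ < 8 / ((N:ℝ)+1) := (div_lt_div_iff_of_pos_right hNpos).2 (by norm_num)
      _ < ε := hNε
  · -- reversed order case
    right
    have hfinG : EMetric.hausdorffEdist W₁.revGraph W.orderGraph ≠ ⊤ :=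
      Metric.hausdorffEdist_ne_top_of_nonempty_of_bounded hGrev₁ne hGne hGrev₁bdd hGbdd
    have transfer : ∀ a b c : ℕ, a ≤ N+1 → b ≤ N+1 → c ≤ N+1 → a ≠ b → b ≠ c → a ≠ c →
        CircBtw (ypt a) (ypt b) (ypt c) → CircBtw (xpt c) (xpt b) (xpt a) := by
      intro a b c ha hb hc hab hbc hac hbtw
      have hmem : ((W₁.j (yK c), W₁.j (yK b), W₁.j (yK a)) : M × M × M) ∈ W₁.revGraph :=
        ⟨yK a, yK b, yK c, hbtw, rfl⟩
      obtain ⟨q, hqG, hdq⟩ := Metric.exists_dist_lt_of_hausdorffDist_lt hmem hGrev hfinG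
      exact approx c b a hc hb ha (Ne.symm hbc) (Ne.symm hab) (Ne.symm hac) q hqG
        (lt_of_lt_of_le hdq (min_le_right _ _))
    have hiff : ∀ i, i < N →
        (CircBtw (ypt (i+1)) (ypt 0) (ypt (i+2)) ↔ ¬ CircBtw (xpt (i+1)) (xpt 0) (xpt (i+2))) := by
      intro i hi
      constructor
      · intro hy hx
        have hxrev : CircBtw (xpt (i+2)) (xpt 0) (xpt (i+1)) :=
          transfer (i+1) 0 (i+2) (by omega) (by omega) (by omega)
            (by omega) (by omega) (by omega) hy
        exact circBtw_not_of_circBtw hx hxrev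
          (hdistinct 0 (i+1) (by omega)).symm (hdistinct 0 (i+2) (by omega))
          (hdistinct (i+1) (i+2) (by omega))
      · intro hx
        by_contra hy
        have hyrev : CircBtw (ypt (i+2)) (ypt 0) (ypt (i+1)) :=
          (circBtw_total (ypt (i+1)) (ypt 0) (ypt (i+2))).resolve_left hy
        exact hx (transfer (i+2) 0 (i+1) (by omega) (by omega) (by omega)
          (by omega) (by omega) (by omega) hyrev)
    have hsum_eq : (∑ i ∈ Finset.range N,
        if CircBtw (ypt (i+1)) (ypt 0) (ypt (i+2)) then (1:ℤ) else 0) =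
        (N : ℤ) - (∑ i ∈ Finset.range N,
        if CircBtw (xpt (i+1)) (xpt 0) (xpt (i+2)) then (1:ℤ) else 0) := by
      have hterm : ∀ i ∈ Finset.range N,
          (if CircBtw (ypt (i+1)) (ypt 0) (ypt (i+2)) then (1:ℤ) else 0) =
          1 - (if CircBtw (xpt (i+1)) (xpt 0) (xpt (i+2)) then (1:ℤ) else 0) := by
        intro i hi
        have hif := hiff i (Finset.mem_range.1 hi)
        by_cases hx : CircBtw (xpt (i+1)) (xpt 0) (xpt (i+2))
        · rw [if_neg (fun hy => (hif.1 hy) hx), if_pos hx]; ring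
        · rw [if_pos (hif.2 hx), if_neg hx]; ring
      rw [Finset.sum_congr rfl hterm, Finset.sum_sub_distrib, Finset.sum_const,
        Finset.card_range]
      simp
    have hfloor_eq : (⌊D₁.u X₁ (N+1)⌋ : ℝ) = (N : ℝ) - (⌊D.u X (N+1)⌋ : ℝ) := by
      have hz : ⌊D₁.u X₁ (N+1)⌋ = (N:ℤ) - ⌊D.u X (N+1)⌋ := by
        rw [← hsum₁, ← hsumW]; exact hsum_eq
      exact_mod_cast congrArg (Int.cast : ℤ → ℝ) hz
    have hdiffabs : |((N:ℝ)+1) * (D₁.β - (1 - D.β))| ≤ 7 := by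
      rw [abs_le] at hbW hb₁ ⊢
      rw [hfloor_eq] at hb₁
      constructor <;> nlinarith [hbW.1, hbW.2, hb₁.1, hb₁.2]
    have hdiff : |D₁.β - (1 - D.β)| ≤ 7 / ((N:ℝ)+1) := by
      rw [le_div_iff₀ hNpos]
      calc |D₁.β - (1 - D.β)| * ((N:ℝ)+1) = |((N:ℝ)+1) * (D₁.β - (1 - D.β))| := by
            rw [abs_mul, abs_of_pos hNpos]; ring
        _ ≤ 7 := hdiffabs
    have hneg : -((W.rot : ℝ) : UnitAddCircle) = (((1 - D.β : ℝ)) : UnitAddCircle) := by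
      rw [hrotW]
      have : ((1 - D.β : ℝ) : UnitAddCircle) = ((1:ℝ) : UnitAddCircle) - ((D.β : ℝ) : UnitAddCircle) :=
        AddCircle.coe_sub _ _ _
      rw [this, show ((1:ℝ) : UnitAddCircle) = 0 from AddCircle.coe_period (1:ℝ), zero_sub]
    calc dist ((W₁.rot : ℝ) : UnitAddCircle) (-((W.rot : ℝ) : UnitAddCircle))
        = dist ((D₁.β : ℝ) : UnitAddCircle) (((1 - D.β : ℝ)) : UnitAddCircle) := by
          rw [hrot₁, hneg]
      _ ≤ |D₁.β - (1 - D.β)| := udist_le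
      _ ≤ 7 / ((N:ℝ)+1) := hdiff
      _ < 8 / ((N:ℝ)+1) := (div_lt_div_iff_of_pos_right hNpos).2 (by norm_num)
      _ < ε := hNε
end
end

section
/- Let α ∈ (0,1) be an irrational real number. Let K₀ ⊆ 𝕋 = ℝ/ℤ be the image of the interval [0, α] under the projection ℝ → ℝ/ℤ and K₁ the image of [α, 1]. Then for every sequence n : ℤ → {0,1} there exists at most one θ ∈ 𝕋 such that θ + kα (mod 1) belongs to K_{n(k)} for every k ∈ ℤ. -/
open Set

/-- The subgroup `ℤα + ℤ` is dense in `ℝ` when `α` is irrational. -/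
lemma dense_zmul_add_int (α : ℝ) (hirr : Irrational α) :
    Dense ((AddSubgroup.zmultiples α ⊔ AddSubgroup.zmultiples (1 : ℝ) : AddSubgroup ℝ) :
      Set ℝ) := by
  rcases AddSubgroup.dense_or_cyclic
      (AddSubgroup.zmultiples α ⊔ AddSubgroup.zmultiples (1 : ℝ)) with h | ⟨a, ha⟩
  · exact h
  · exfalso
    have hα : α ∈ AddSubgroup.closure ({a} : Set ℝ) := by
      rw [← ha]
      exact AddSubgroup.mem_sup_left (AddSubgroup.mem_zmultiples α)
    have h1 : (1 : ℝ) ∈ AddSubgroup.closure ({a} : Set ℝ) := by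
      rw [← ha]
      exact AddSubgroup.mem_sup_right (AddSubgroup.mem_zmultiples 1)
    rw [AddSubgroup.mem_closure_singleton] at hα h1
    obtain ⟨n, hn⟩ := hα
    obtain ⟨m, hm⟩ := h1
    rw [zsmul_eq_mul] at hn hm
    have hm0 : (m : ℝ) ≠ 0 := by
      rintro h
      rw [h, zero_mul] at hm
      exact one_ne_zero hm.symm
    have hmz : m ≠ 0 := by exact_mod_cast fun h => hm0 (by exact_mod_cast congrArg Int.cast h)
    refine hirr ⟨(n : ℚ) / (m : ℚ), ?_⟩
    have : α * m = n := by
      calc α * m = (n * a) * m := by rw [hn]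
        _ = n * (m * a) := by ring
        _ = n * 1 := by rw [hm]
        _ = n := by ring
    push_cast
    field_simp
    linarith [this]

private lemma no_int_in_Ioo_neg {j : ℤ} (h1 : (-1 : ℝ) < j) (h2 : (j : ℝ) < 0) : False := by
  have a1 : (-1 : ℤ) < j := by exact_mod_cast h1
  have a2 : j < 0 := by exact_mod_cast h2
  omega

private lemma no_int_in_Ioo_pos {j : ℤ} (h1 : (0 : ℝ) < j) (h2 : (j : ℝ) < 1) : False := by
  have a1 : (0 : ℤ) < j := by exact_mod_cast h1
  have a2 : j < 1 := by exact_mod_cast h2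
  omega

/-- For an irrational rotation, any binary itinerary with respect to the two arcs
`[0, α]` and `[α, 1]` is realized by at most one point of the circle. -/
theorem rotation_itinerary_unique
    (α : ℝ) (hirr : Irrational α) (h0 : 0 < α) (h1 : α < 1)
    (K : Fin 2 → Set UnitAddCircle)
    (hK0 : K 0 = (fun x : ℝ => (x : UnitAddCircle)) '' Set.Icc 0 α)
    (hK1 : K 1 = (fun x : ℝ => (x : UnitAddCircle)) '' Set.Icc α 1)
    (n : ℤ → Fin 2) (θ₁ θ₂ : UnitAddCircle)
    (hθ₁ : ∀ k : ℤ, θ₁ + ((((k : ℝ) * α : ℝ)) : UnitAddCircle) ∈ K (n k))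
    (hθ₂ : ∀ k : ℤ, θ₂ + ((((k : ℝ) * α : ℝ)) : UnitAddCircle) ∈ K (n k)) :
    θ₁ = θ₂ := by
  by_contra hne
  obtain ⟨t₁, ht₁⟩ := QuotientAddGroup.mk_surjective θ₁
  -- representative of θ₂ - θ₁ in [0,1)
  set cc := AddCircle.equivIco (1 : ℝ) 0 (θ₂ - θ₁) with hcc_def
  set c : ℝ := (cc : ℝ) with hc_def
  have hcIco : c ∈ Ico (0 : ℝ) (0 + 1) := cc.2
  have hc_coe : ((c : ℝ) : UnitAddCircle) = θ₂ - θ₁ :=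
    (AddCircle.equivIco (1 : ℝ) 0).symm_apply_apply (θ₂ - θ₁)
  have hc_ne : c ≠ 0 := by
    intro h
    apply hne
    have : ((0 : ℝ) : UnitAddCircle) = θ₂ - θ₁ := by rw [← h]; exact hc_coe
    have h0' : θ₂ - θ₁ = 0 := by
      rw [← this]; norm_num
    have := sub_eq_zero.mp h0'
    exact this.symm
  have hc0 : 0 < c := lt_of_le_of_ne hcIco.1 (Ne.symm hc_ne)
  have hc1 : c < 1 := by simpa using hcIco.2
  -- the target open interval
  set lo : ℝ := max α (1 - c) with hlo_def
  set hi : ℝ := min 1 (1 - c + α) with hhi_def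
  have hlohi : lo < hi := by
    rw [hlo_def, hhi_def]
    rcases max_cases α (1 - c) with ⟨he, _⟩ | ⟨he, _⟩ <;> rw [he] <;>
      simp [lt_min_iff] <;> constructor <;> linarith
  have hdense := dense_zmul_add_int α hirr
  obtain ⟨g, hgS, hgI⟩ : ∃ g ∈ ((AddSubgroup.zmultiples α ⊔ AddSubgroup.zmultiples (1 : ℝ) :
      AddSubgroup ℝ) : Set ℝ), g ∈ Ioo (lo - t₁) (hi - t₁) := by
    have hne' : (Ioo (lo - t₁) (hi - t₁)).Nonempty := by
      refine ⟨(lo - t₁ + (hi - t₁)) / 2, ?_, ?_⟩ <;> · linarith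
    obtain ⟨x, hx1, hx2⟩ := hdense.exists_mem_open isOpen_Ioo hne'
    exact ⟨x, hx1, hx2⟩
  rw [SetLike.mem_coe, AddSubgroup.mem_sup] at hgS
  obtain ⟨y, hy, z, hz, hyz⟩ := hgS
  rw [AddSubgroup.mem_zmultiples_iff] at hy hz
  obtain ⟨k, hk⟩ := hy
  obtain ⟨m, hm⟩ := hz
  set x : ℝ := t₁ + g with hx_def
  have hxI : x ∈ Ioo lo hi := by
    constructor
    · have := hgI.1; rw [hx_def]; linarith
    · have := hgI.2; rw [hx_def]; linarith
  have hxα1 : x ∈ Ioo α 1 := by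
    refine ⟨lt_of_le_of_lt (le_max_left _ _) hxI.1, lt_of_lt_of_le hxI.2 (min_le_left _ _)⟩
  -- θ₁ + kα = x on the circle
  have hcirc1 : θ₁ + ((((k : ℝ) * α : ℝ)) : UnitAddCircle) = (x : UnitAddCircle) := by
    rw [← ht₁]
    have : ((t₁ : ℝ) : UnitAddCircle) + (((k : ℝ) * α : ℝ) : UnitAddCircle)
        = ((t₁ + (k : ℝ) * α : ℝ) : UnitAddCircle) := by
      rw [← AddCircle.coe_add]
    rw [this]
    symm
    rw [QuotientAddGroup.eq_iff_sub_mem]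
    refine AddSubgroup.mem_zmultiples_iff.mpr ⟨m, ?_⟩
    rw [zsmul_eq_mul, mul_one]
    rw [zsmul_eq_mul] at hk hm
    rw [hx_def, ← hyz, ← hk, ← hm]
    ring
  -- θ₂ + kα = x + c - 1 on the circle
  set w : ℝ := x + c - 1 with hw_def
  have hw0α : w ∈ Ioo (0 : ℝ) α := by
    constructor
    · have := hxI.1
      have : lo < x := this
      have hlo' : 1 - c ≤ lo := le_max_right _ _
      rw [hw_def]; linarith
    · have := hxI.2
      have hhi' : hi ≤ 1 - c + α := min_le_right _ _
      rw [hw_def]; linarith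
  have hcirc2 : θ₂ + ((((k : ℝ) * α : ℝ)) : UnitAddCircle) = (w : UnitAddCircle) := by
    have hθ2 : θ₂ = θ₁ + ((c : ℝ) : UnitAddCircle) := by
      rw [hc_coe]; abel
    rw [hθ2, add_right_comm, hcirc1, ← AddCircle.coe_add]
    symm
    rw [QuotientAddGroup.eq_iff_sub_mem]
    refine AddSubgroup.mem_zmultiples_iff.mpr ⟨-1, ?_⟩
    rw [zsmul_eq_mul, mul_one, hw_def]
    push_cast
    ring
  -- x is not in K 0
  have hnot0 : (x : UnitAddCircle) ∉ K 0 := by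
    rw [hK0]
    rintro ⟨y', ⟨hy0, hyα⟩, hxy⟩
    have : y' - x ∈ AddSubgroup.zmultiples (1 : ℝ) :=
      QuotientAddGroup.eq_iff_sub_mem.mp hxy
    obtain ⟨j, hj⟩ := AddSubgroup.mem_zmultiples_iff.mp this
    rw [zsmul_eq_mul, mul_one] at hj
    refine no_int_in_Ioo_neg (j := j) ?_ ?_
    · rw [hj]; have := hxα1.2; linarith
    · rw [hj]; have := hxα1.1; linarith
  -- w is not in K 1
  have hnot1 : (w : UnitAddCircle) ∉ K 1 := by
    rw [hK1]
    rintro ⟨y', ⟨hyα, hy1⟩, hwy⟩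
    have : y' - w ∈ AddSubgroup.zmultiples (1 : ℝ) :=
      QuotientAddGroup.eq_iff_sub_mem.mp hwy
    obtain ⟨j, hj⟩ := AddSubgroup.mem_zmultiples_iff.mp this
    rw [zsmul_eq_mul, mul_one] at hj
    refine no_int_in_Ioo_pos (j := j) ?_ ?_
    · rw [hj]; have := hw0α.2; linarith
    · rw [hj]; have := hw0α.1; linarith
  have hmem1 := hθ₁ k
  have hmem2 := hθ₂ k
  rw [hcirc1] at hmem1
  rw [hcirc2] at hmem2
  rcases eq_or_ne (n k) 0 with h | h
  · rw [h] at hmem1; exact hnot0 hmem1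
  · have : n k = 1 := by omega
    rw [this] at hmem2; exact hnot1 hmem2
end
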